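/- arXiv:2503.17884 — 8 statements merged into one kernel-verified Lean document; each statement's English description precedes it below -/
import Mathlib

section
/- Let G ≤ S_d be a transitive permutation group on {1,...,d}. Then there exists a chain of subgroups G = H_0 ≥ H_1 ≥ ... ≥ H_d = {id} such that [H_0 : H_1] = d and [H_i : H_{i+1}] < d for all i = 1, ..., d-1. -/
set_option maxHeartbeats 1000000

private lemma stab_subgroupOf {A : Type*} [Group A] {X : Type*} [MulAction A X]
    (K : Subgroup A) (x : X) :
    (MulAction.stabilizer A x).subgroupOf K = MulAction.stabilizer ↥K x := by
  ext k
  simp [Subgroup.mem_subgroupOf, MulAction.mem_stabilizer_iff]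
  rfl

/-- If `G ≤ S_d` is a transitive permutation group, then there is a chain of
subgroups `G = H_0 ≥ H_1 ≥ ... ≥ H_d = ⊥` with `[H_0 : H_1] = d` and `[H_i : H_{i+1}] < d`
for all `i = 1, ..., d-1`. -/
theorem stmt1 (d : ℕ) (hd : 0 < d) (G : Subgroup (Equiv.Perm (Fin d)))
    (htrans : ∀ x y : Fin d, ∃ g ∈ G, g x = y) :
    ∃ H : Fin (d + 1) → Subgroup ↥G,
      H 0 = ⊤ ∧ H (Fin.last d) = ⊥ ∧
      (∀ i j : Fin (d + 1), i ≤ j → H j ≤ H i) ∧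
      (H 1).relIndex (H 0) = d ∧
      ∀ i : Fin d, (i : ℕ) ≠ 0 → (H i.succ).relIndex (H i.castSucc) < d := by
  set H : Fin (d + 1) → Subgroup ↥G :=
    fun k => ⨅ (j : Fin d) (_ : (j : ℕ) < (k : ℕ)), MulAction.stabilizer ↥G j with hH
  have hmem : ∀ (k : Fin (d+1)) (g : ↥G), g ∈ H k ↔
      ∀ j : Fin d, (j : ℕ) < (k : ℕ) → (g : Equiv.Perm (Fin d)) j = j := by
    intro k g
    simp only [hH, Subgroup.mem_iInf, MulAction.mem_stabilizer_iff]
    rfl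
  have h0 : H 0 = ⊤ := by ext g; simp [hmem]
  refine ⟨H, h0, ?_, ?_, ?_, ?_⟩
  · ext g
    simp only [Subgroup.mem_bot, hmem, Fin.val_last]
    constructor
    · intro h
      ext1
      exact Equiv.ext fun j => h j j.isLt
    · rintro rfl j _; rfl
  · intro i j hij g hg
    rw [hmem] at hg ⊢
    exact fun p hp => hg p (lt_of_lt_of_le hp (by exact_mod_cast hij))
  · have h1 : H 1 = MulAction.stabilizer ↥G (⟨0, hd⟩ : Fin d) := by
      ext g
      simp only [hmem, MulAction.mem_stabilizer_iff]
      have hv1 : ((1 : Fin (d+1)) : ℕ) = 1 := by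
        rw [Fin.val_one']; exact Nat.mod_eq_of_lt (by omega)
      constructor
      · intro h; exact h ⟨0, hd⟩ (by rw [hv1]; exact Nat.zero_lt_one)
      · intro h j hj
        rw [hv1] at hj
        have hj0 : (j : ℕ) = 0 := by omega
        have : j = ⟨0, hd⟩ := Fin.ext (by simp [hj0])
        rw [this]; exact h
    rw [h0, Subgroup.relIndex_top_right, h1, MulAction.index_stabilizer]
    have horb : MulAction.orbit ↥G (⟨0, hd⟩ : Fin d) = Set.univ := by
      ext y
      simp only [Set.mem_univ, iff_true, MulAction.mem_orbit_iff]
      obtain ⟨g, hg, hgy⟩ := htrans ⟨0, hd⟩ y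
      exact ⟨⟨g, hg⟩, hgy⟩
    rw [horb, Set.ncard_univ, Nat.card_eq_fintype_card, Fintype.card_fin]
  · intro i hi0
    have hsplit : H i.succ = MulAction.stabilizer ↥G i ⊓ H i.castSucc := by
      ext g
      simp only [hmem, Subgroup.mem_inf, MulAction.mem_stabilizer_iff,
        Fin.val_succ, Fin.coe_castSucc]
      constructor
      · intro h
        exact ⟨h i (Nat.lt_succ_self _), fun j hj => h j (hj.trans (Nat.lt_succ_self _))⟩
      · rintro ⟨h1, h2⟩ j hj
        rcases Nat.lt_succ_iff_lt_or_eq.mp hj with hj | hj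
        · exact h2 j hj
        · have : j = i := Fin.ext hj
          rw [this]; exact h1
    rw [hsplit, Subgroup.inf_relIndex_right, Subgroup.relIndex,
      stab_subgroupOf, MulAction.index_stabilizer]
    have hsub : MulAction.orbit ↥(H i.castSucc) i ⊆ ({(⟨0, hd⟩ : Fin d)}ᶜ : Set (Fin d)) := by
      rintro y ⟨k, rfl⟩
      simp only [Set.mem_compl_iff, Set.mem_singleton_iff]
      intro hky
      have hk0 : ((k : ↥G) : Equiv.Perm (Fin d)) ⟨0, hd⟩ = ⟨0, hd⟩ := by
        have := k.2
        rw [hmem] at this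
        exact this ⟨0, hd⟩ (by simpa using Nat.pos_of_ne_zero hi0)
      have hky' : ((k : ↥G) : Equiv.Perm (Fin d)) i = ⟨0, hd⟩ := hky
      have : i = (⟨0, hd⟩ : Fin d) :=
        ((k : ↥G) : Equiv.Perm (Fin d)).injective (by rw [hky', hk0])
      exact hi0 (by simpa using congrArg Fin.val this)
    calc (MulAction.orbit ↥(H i.castSucc) i).ncard
        ≤ ({(⟨0, hd⟩ : Fin d)}ᶜ : Set (Fin d)).ncard := Set.ncard_le_ncard hsub (Set.toFinite _)
      _ = d - 1 := by simp [Set.ncard_eq_toFinset_card', Finset.card_compl]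
      _ < d := by omega
end

section
/- Let G be a finite simple group and H < G a proper subgroup of index d = [G : H]. Then there exists a chain of subgroups G = H_0 ≥ H_1 = H ≥ H_2 ≥ ... ≥ H_d = {id} such that [H_0 : H_1] > [H_i : H_{i+1}] for all i = 1, ..., d-1. -/
/-- If `G` is a finite simple group and `H < G` has index `d`, then there is a
chain of subgroups `G = H_0 ≥ H_1 = H ≥ H_2 ≥ ... ≥ H_d = ⊥` with
`[H_0 : H_1] = d > [H_i : H_{i+1}]` for all `i = 1, ..., d-1`. -/
theorem stmt2 (G : Type*) [Group G] [Finite G] [IsSimpleGroup G]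
    (H : Subgroup G) (hH : H < ⊤) (d : ℕ) (hd : d = H.index) :
    ∃ C : Fin (d + 1) → Subgroup G,
      C 0 = ⊤ ∧ C 1 = H ∧ C (Fin.last d) = ⊥ ∧
      (∀ i j : Fin (d + 1), i ≤ j → C j ≤ C i) ∧
      (C 1).relIndex (C 0) = d ∧
      ∀ i : Fin d, (i : ℕ) ≠ 0 → (C i.succ).relIndex (C i.castSucc) < d := by
  subst hd
  -- basic facts about d = H.index
  have hd0 : H.index ≠ 0 := Subgroup.index_ne_zero_of_finite
  have hd1 : 1 < H.index := Subgroup.one_lt_index_of_ne_top hH.ne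
  -- enumerate the cosets, with the trivial coset first
  haveI : Fintype (G ⧸ H) := Fintype.ofFinite _
  haveI : NeZero H.index := ⟨hd0⟩
  have hc : Fintype.card (G ⧸ H) = H.index := by
    rw [← Nat.card_eq_fintype_card]; rfl
  let f : G ⧸ H ≃ Fin H.index := Fintype.equivFinOfCardEq hc
  let e : Fin H.index ≃ G ⧸ H :=
    (Equiv.swap (0 : Fin H.index) (f ((1 : G) : G ⧸ H))).trans f.symm
  have he0 : e 0 = ((1 : G) : G ⧸ H) := by
    simp [e, Equiv.swap_apply_left]
  -- the chain of pointwise stabilizers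
  set C : Fin (H.index + 1) → Subgroup G :=
    fun k => ⨅ j : Fin H.index, ⨅ _ : (j : ℕ) < (k : ℕ), MulAction.stabilizer G (e j) with hC
  refine ⟨C, ?_, ?_, ?_, ?_, ?_, ?_⟩
  -- C 0 = ⊤
  · simp [hC]
  -- C 1 = H
  · have hv1 : ((1 : Fin (H.index + 1)) : ℕ) = 1 := by
      rw [Fin.val_one']; exact Nat.mod_eq_of_lt (by omega)
    apply le_antisymm
    · refine le_trans (iInf_le _ 0) ?_
      refine le_trans (iInf_le _ (by rw [hv1, Fin.val_zero]; omega)) ?_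
      rw [he0, MulAction.stabilizer_quotient]
    · refine le_iInf fun j => le_iInf fun hj => ?_
      have hj0 : j = 0 := by
        apply Fin.ext; simp only [Fin.val_zero]; rw [hv1] at hj; omega
      subst hj0
      rw [he0, MulAction.stabilizer_quotient]
  -- C (last) = ⊥
  · have hcore : H.normalCore = ⊥ := by
      rcases H.normalCore_normal.eq_bot_or_eq_top with h | h
      · exact h
      · exact absurd (h ▸ H.normalCore_le) (by simpa using hH.ne)
    apply le_antisymm _ bot_le
    rw [← hcore, Subgroup.normalCore_eq_ker]
    intro g hg
    have hg' : ∀ j : Fin H.index, g • e j = e j := by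
      intro j
      have := Subgroup.mem_iInf.mp hg j
      have := Subgroup.mem_iInf.mp this (by simp [Fin.val_last])
      exact this
    rw [MonoidHom.mem_ker]
    ext x
    have : g • x = x := by
      have := hg' (e.symm x)
      simpa using this
    simpa using this
  -- antitone
  · intro i j hij
    refine le_iInf fun k => le_iInf fun hk => ?_
    exact le_trans (iInf_le _ k) (iInf_le _ (lt_of_lt_of_le hk hij))
  -- first relindex
  · have h0 : C 0 = ⊤ := by simp [hC]
    have h1 : C 1 = H := by
      have hv1 : ((1 : Fin (H.index + 1)) : ℕ) = 1 := by
        rw [Fin.val_one']; exact Nat.mod_eq_of_lt (by omega)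
      apply le_antisymm
      · refine le_trans (iInf_le _ 0) ?_
        refine le_trans (iInf_le _ (by rw [hv1, Fin.val_zero]; omega)) ?_
        rw [he0, MulAction.stabilizer_quotient]
      · refine le_iInf fun j => le_iInf fun hj => ?_
        have hj0 : j = 0 := by
          apply Fin.ext; simp only [Fin.val_zero]; rw [hv1] at hj; omega
        subst hj0
        rw [he0, MulAction.stabilizer_quotient]
    rw [h0, h1, Subgroup.relIndex_top_right]
  -- the strict inequalities
  · intro i hi
    have hsucc : (i.succ : ℕ) = (i : ℕ) + 1 := by simp
    have hcast : (i.castSucc : ℕ) = (i : ℕ) := by simp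
    set A := C i.castSucc with hA
    -- C i.succ = A ⊓ stabilizer of e i
    have hstep : C i.succ = A ⊓ MulAction.stabilizer G (e i) := by
      apply le_antisymm
      · refine le_inf ?_ ?_
        · refine le_iInf fun k => le_iInf fun hk => ?_
          refine le_trans (iInf_le _ k) (iInf_le _ ?_)
          omega
        · refine le_trans (iInf_le _ i) (iInf_le _ ?_)
          omega
      · refine le_iInf fun k => le_iInf fun hk => ?_
        rw [hsucc] at hk
        rcases Nat.lt_succ_iff_lt_or_eq.mp hk with h | h
        · refine le_trans inf_le_left ?_
          refine le_trans (iInf_le _ k) (iInf_le _ ?_)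
          omega
        · have : k = i := Fin.ext h
          subst this
          exact inf_le_right
    -- elements of A fix e 0
    have hfix0 : ∀ a ∈ A, a • e 0 = e 0 := by
      intro a ha
      have := Subgroup.mem_iInf.mp ha 0
      have := Subgroup.mem_iInf.mp this (by show ((0 : Fin H.index) : ℕ) < (i.castSucc : ℕ); rw [hcast, Fin.val_zero]; omega)
      exact this
    rw [hstep, Subgroup.inf_relIndex_left]
    have key : (MulAction.stabilizer G (e i)).subgroupOf A
        = MulAction.stabilizer A (e i) := by ext; rfl
    rw [Subgroup.relIndex, key, MulAction.index_stabilizer]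
    -- the orbit misses e 0
    have hmiss : e 0 ∉ MulAction.orbit A (e i) := by
      rintro ⟨a, ha⟩
      have h1 : (a : G) • e i = e 0 := ha
      have h2 : (a : G) • e 0 = e 0 := hfix0 a a.2
      have : e i = e 0 := by
        have := h1.trans h2.symm
        exact smul_left_cancel _ this
      have : i = 0 := e.injective this
      exact hi (by simp [this])
    have hsub : MulAction.orbit A (e i) ⊂ Set.univ := by
      refine ⟨Set.subset_univ _, fun h => hmiss (h (Set.mem_univ _))⟩
    calc (MulAction.orbit A (e i)).ncard
        < (Set.univ : Set (G ⧸ H)).ncard :=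
          Set.ncard_lt_ncard hsub Set.finite_univ
      _ = H.index := by rw [Set.ncard_univ]; rfl
end

section
/- Let G ≤ S_d be a transitive permutation group on {1,...,d}. If G contains a subgroup of the form S_k × S_{d-k} (the stabilizer of the partition {1,...,k} ⊔ {k+1,...,d}, acting fully on each block) for some 1 ≤ k < d/2, then G = S_d. -/
open scoped Pointwise

/-- Let `G ≤ S_d` be transitive. If `G` contains the subgroup
`S_k × S_{d-k}` (the setwise stabilizer of the block `{1,...,k}`) for some `1 ≤ k < d/2`,
then `G = S_d`. -/
theorem stmt5 (d k : ℕ) (hk : 1 ≤ k) (hk' : 2 * k < d)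
    (G : Subgroup (Equiv.Perm (Fin d)))
    (htrans : ∀ x y : Fin d, ∃ g ∈ G, g x = y)
    (hsub : MulAction.stabilizer (Equiv.Perm (Fin d))
        ({i : Fin d | (i : ℕ) < k} : Set (Fin d)) ≤ G) :
    G = ⊤ := by
  classical
  set B : Set (Fin d) := {i : Fin d | (i : ℕ) < k} with hBdef
  have hd : 0 < d := by omega
  have hkd : k < d := by omega
  -- criterion for membership in the stabilizer of a set, for a permutation
  have hstab : ∀ (S : Set (Fin d)) (σ : Equiv.Perm (Fin d)), (∀ i, i ∈ S ↔ σ i ∈ S) →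
      σ ∈ MulAction.stabilizer (Equiv.Perm (Fin d)) S := by
    intro S σ hσ
    rw [MulAction.mem_stabilizer_iff]
    ext x
    rw [Set.mem_smul_set_iff_inv_smul_mem]
    have h2 := hσ (σ⁻¹ x)
    rw [show σ (σ⁻¹ x) = x from σ.apply_symm_apply x] at h2
    exact h2
  -- swaps with both points in B or both outside of B lie in the stabilizer of B
  have hswapB : ∀ u v : Fin d, (u ∈ B ↔ v ∈ B) →
      Equiv.swap u v ∈ MulAction.stabilizer (Equiv.Perm (Fin d)) B := by
    intro u v huv
    apply hstab
    intro i
    rcases eq_or_ne i u with rfl | hiu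
    · rw [Equiv.swap_apply_left]; exact huv
    rcases eq_or_ne i v with rfl | hiv
    · rw [Equiv.swap_apply_right]; exact huv.symm
    · rw [Equiv.swap_apply_of_ne_of_ne hiu hiv]
  have ha0 : (⟨0, hd⟩ : Fin d) ∈ B := by simpa [B] using (by omega : 0 < k)
  have hb0 : (⟨k, hkd⟩ : Fin d) ∉ B := by simp [B]
  obtain ⟨g, hgG, hg⟩ := htrans ⟨0, hd⟩ ⟨k, hkd⟩
  set C : Set (Fin d) := g '' B with hCdef
  -- the stabilizer of C is contained in G
  have hCG : MulAction.stabilizer (Equiv.Perm (Fin d)) C ≤ G := by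
    have hC : C = g • B := rfl
    rw [hC, MulAction.stabilizer_smul_eq_stabilizer_map_conj]
    rintro σ hσ
    simp only [Subgroup.mem_map] at hσ
    obtain ⟨τ, hτ, rfl⟩ := hσ
    simpa [MulAut.conj] using
      mul_mem (mul_mem hgG (hsub hτ)) (inv_mem hgG)
  -- there is a swap in G exchanging a point of B with a point outside B
  have key : ∃ a b : Fin d, a ∈ B ∧ b ∉ B ∧ Equiv.swap a b ∈ G := by
    by_cases hCB : ∃ c, c ∈ C ∩ B
    · obtain ⟨c, hcC, hcB⟩ := hCB
      refine ⟨c, ⟨k, hkd⟩, hcB, hb0, ?_⟩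
      apply hCG
      apply hstab
      have hbC : (⟨k, hkd⟩ : Fin d) ∈ C := ⟨⟨0, hd⟩, ha0, hg⟩
      intro i
      rcases eq_or_ne i c with rfl | hic
      · rw [Equiv.swap_apply_left]; exact ⟨fun _ => hbC, fun _ => hcC⟩
      rcases eq_or_ne i ⟨k, hkd⟩ with rfl | hib
      · rw [Equiv.swap_apply_right]; exact ⟨fun _ => hcC, fun _ => hbC⟩
      · rw [Equiv.swap_apply_of_ne_of_ne hic hib]
    · -- C ∩ B = ∅, so B ⊆ Cᶜ; find a point outside both B and C via cardinality
      push_neg at hCB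
      have hBC : ∀ x ∈ B, x ∉ C := fun x hx hxC => hCB x ⟨hxC, hx⟩
      have hBcard : B.ncard ≤ k := by
        have hrange : B = Set.range (Fin.castLE hkd.le) := (Fin.range_castLE hkd.le).symm
        rw [hrange, ← Nat.card_coe_set_eq,
          Nat.card_range_of_injective (Fin.castLE_injective hkd.le), Nat.card_eq_fintype_card,
          Fintype.card_fin]
      have hCcard : C.ncard ≤ k := by
        rw [hCdef, Set.ncard_image_of_injective _ g.injective]; exact hBcard
      have hexists : ∃ b, b ∉ B ∧ b ∉ C := by
        by_contra hcon
        push_neg at hcon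
        have hsubBC : (Bᶜ : Set (Fin d)) ⊆ C := by
          intro x hx
          exact hcon x hx
        have h1 : (Bᶜ : Set (Fin d)).ncard ≤ C.ncard :=
          Set.ncard_le_ncard hsubBC (Set.toFinite C)
        have h2 : B.ncard + (Bᶜ : Set (Fin d)).ncard = d := by
          rw [Set.ncard_add_ncard_compl]; simp
        omega
      obtain ⟨b, hbB, hbC⟩ := hexists
      refine ⟨⟨0, hd⟩, b, ha0, hbB, ?_⟩
      apply hCG
      apply hstab
      intro i
      have h1 : (⟨0, hd⟩ : Fin d) ∉ C := hBC _ ha0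
      rcases eq_or_ne i ⟨0, hd⟩ with rfl | hi0
      · rw [Equiv.swap_apply_left]
        exact ⟨fun h => absurd h h1, fun h => absurd h hbC⟩
      rcases eq_or_ne i b with rfl | hib
      · rw [Equiv.swap_apply_right]
        exact ⟨fun h => absurd h hbC, fun h => absurd h h1⟩
      · rw [Equiv.swap_apply_of_ne_of_ne hi0 hib]
  obtain ⟨a, b, haB, hbB, habG⟩ := key
  -- every crossing swap lies in G
  have hcross : ∀ x y : Fin d, x ∈ B → y ∉ B → Equiv.swap x y ∈ G := by
    intro x y hx hy
    set h : Equiv.Perm (Fin d) := Equiv.swap a x * Equiv.swap b y with hh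
    have hhG : h ∈ G := by
      apply hsub
      exact mul_mem (hswapB a x ⟨fun _ => hx, fun _ => haB⟩)
        (hswapB b y ⟨fun h => absurd h hbB, fun h => absurd h hy⟩)
    have hha : h a = x := by
      have hab : a ≠ b := fun h => hbB (h ▸ haB)
      have hay : a ≠ y := fun h => hy (h ▸ haB)
      simp [hh, Equiv.swap_apply_of_ne_of_ne hab hay]
    have hhb : h b = y := by
      have hya : y ≠ a := fun h => hy (h ▸ haB)
      have hyx : y ≠ x := fun h => hy (h ▸ hx)
      simp [hh, Equiv.swap_apply_of_ne_of_ne hya hyx]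
    have : Equiv.swap x y = h * Equiv.swap a b * h⁻¹ := by
      rw [← Equiv.swap_apply_apply, hha, hhb]
    rw [this]
    exact mul_mem (mul_mem hhG habG) (inv_mem hhG)
  -- conclude: all swaps lie in G
  rw [eq_top_iff, ← Equiv.Perm.closure_isSwap, Subgroup.closure_le]
  rintro σ ⟨x, y, hxy, rfl⟩
  by_cases hx : x ∈ B <;> by_cases hy : y ∈ B
  · exact hsub (hswapB x y ⟨fun _ => hy, fun _ => hx⟩)
  · exact hcross x y hx hy
  · rw [Equiv.swap_comm]; exact hcross y x hy hx
  · exact hsub (hswapB x y ⟨fun h => absurd h hx, fun h => absurd h hy⟩)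
end

section
/- For any finite group G and any normal subgroup N ⊴ G, the Galois width satisfies B(G) = max(B(G/N), B(N)). -/
/-- A maximal (unrefinable) chain of subgroups of `G` from `⊤` down to `⊥`: each step is
strict and admits no subgroup strictly in between. -/
def IsMaximalSubgroupChain {G : Type*} [Group G] {n : ℕ} (H : Fin (n + 1) → Subgroup G) : Prop :=
  H 0 = ⊤ ∧ H (Fin.last n) = ⊥ ∧
    ∀ i : Fin n, H i.succ < H i.castSucc ∧
      ∀ K : Subgroup G, ¬(H i.succ < K ∧ K < H i.castSucc)

/-- The cost of a chain of subgroups: the maximum of the relative indices of its steps. -/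
noncomputable def chainCost {G : Type*} [Group G] {n : ℕ} (H : Fin (n + 1) → Subgroup G) : ℕ :=
  Finset.univ.sup fun i : Fin n => (H i.succ).relIndex (H i.castSucc)

/-- The Galois width of a group `G`: the minimum cost over all maximal chains of subgroups. -/
noncomputable def galoisWidth (G : Type*) [Group G] : ℕ :=
  sInf {c : ℕ | ∃ (n : ℕ) (H : Fin (n + 1) → Subgroup G), IsMaximalSubgroupChain H ∧ chainCost H = c}


open Subgroup List

section Aux
variable {G : Type*} [Group G]

lemma relindex_ne_zero' [Finite G] (H K : Subgroup G) : H.relIndex K ≠ 0 :=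
  Subgroup.index_ne_zero_of_finite

lemma exists_covby_between [Finite G] {A B : Subgroup G} (h : A < B) :
    ∃ K : Subgroup G, A ≤ K ∧ K ⋖ B := by
  have : Finite (Subgroup G) := Finite.of_injective _ SetLike.coe_injective
  obtain ⟨K, hK, hmax⟩ := Set.Finite.exists_maximalFor id {K : Subgroup G | A ≤ K ∧ K < B}
    (Set.toFinite _) ⟨A, le_refl A, h⟩
  refine ⟨K, hK.1, hK.2, fun C hKC hCB => ?_⟩
  exact hKC.ne (le_antisymm hKC.le (hmax ⟨hK.1.trans hKC.le, hCB⟩ hKC.le))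

end Aux

section Seg
variable {G : Type*} [Group G]

/-- Between any `A ≤ B` in a finite group there is an unrefinable chain whose step
indices divide `A.relIndex B`. -/
lemma exists_cov_chain [Finite G] : ∀ (d : ℕ) (A B : Subgroup G), A ≤ B → A.relIndex B = d →
    ∃ l : List (Subgroup G), l.IsChain (fun x y => y ⋖ x ∧ y.relIndex x ∣ d) ∧
      l.head? = some B ∧ l.getLast? = some A := by
  intro d
  induction d using Nat.strong_induction_on with
  | _ d ih =>
    intro A B hAB hd
    rcases eq_or_lt_of_le hAB with rfl | hlt
    · exact ⟨[A], List.isChain_singleton _, rfl, rfl⟩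
    · obtain ⟨K, hAK, hKB⟩ := exists_covby_between hlt
      have hmul : A.relIndex K * K.relIndex B = d := hd ▸ relIndex_mul_relIndex A K B hAK hKB.le
      have hKB1 : K.relIndex B ≠ 1 := fun h => hKB.lt.not_ge (Subgroup.relIndex_eq_one.mp h)
      have hKB0 : K.relIndex B ≠ 0 := relindex_ne_zero' K B
      have hAK0 : A.relIndex K ≠ 0 := relindex_ne_zero' A K
      have hlt' : A.relIndex K < d := by
        rcases Nat.lt_or_ge (A.relIndex K) d with h | h
        · exact h
        · exfalso
          have h2 : 2 ≤ K.relIndex B := by omega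
          nlinarith [Nat.pos_of_ne_zero hAK0]
      obtain ⟨l, hl, hh, hla⟩ := ih _ hlt' A K hAK rfl
      obtain ⟨x, t, rfl⟩ : ∃ x t, l = x :: t := by
        cases l with
        | nil => simp at hh
        | cons x t => exact ⟨x, t, rfl⟩
      have hxK : x = K := by simpa using hh
      refine ⟨B :: x :: t, ?_, rfl, ?_⟩
      · rw [List.isChain_cons_cons]
        refine ⟨⟨hxK ▸ hKB, hxK ▸ ⟨A.relIndex K, by rw [mul_comm] at hmul; exact hmul.symm⟩⟩,
          hl.imp fun a b hab => ⟨hab.1, hab.2.trans ⟨K.relIndex B, hmul.symm⟩⟩⟩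
      · rw [List.getLast?_cons_cons]; exact hla

lemma chain'_glue {α : Type*} {R : α → α → Prop} {l1 l2 : List α} {x : α}
    (h1 : l1.IsChain R) (h2 : l2.IsChain R)
    (hx1 : l1.getLast? = some x) (hx2 : l2.head? = some x) :
    (l1 ++ l2.tail).IsChain R ∧ (l1 ++ l2.tail).head? = l1.head? ∧
      (l1 ++ l2.tail).getLast? = l2.getLast? := by
  obtain ⟨t, rfl⟩ : ∃ t, l2 = x :: t := by
    cases l2 with
    | nil => simp at hx2
    | cons a t => exact ⟨t, by simpa using (by simpa using hx2 : a = x) ▸ rfl⟩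
  obtain ⟨y, s, rfl⟩ : ∃ y s, l1 = y :: s := by
    cases l1 with
    | nil => simp at hx1
    | cons y s => exact ⟨y, s, rfl⟩
  refine ⟨List.isChain_append.2 ⟨h1, (List.isChain_cons.mp h2).2, ?_⟩, by simp, ?_⟩
  · intro a ha b hb
    rw [hx1] at ha
    obtain rfl : a = x := by simpa using ha.symm
    exact (List.isChain_cons.mp h2).1 b hb
  · cases t with
    | nil => simpa using hx1
    | cons b t' =>
        show ((y :: s) ++ b :: t').getLast? = _
        rw [List.getLast?_append_cons, List.getLast?_cons_cons]
end Seg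

section Conv
variable {G : Type*} [Group G]

/-- Convert a cover-chain list into a maximal subgroup chain. -/
lemma chain_of_list {c : ℕ} {l : List (Subgroup G)}
    (hl : l.IsChain (fun x y => y ⋖ x ∧ y.relIndex x ≤ c))
    (hh : l.head? = some ⊤) (hla : l.getLast? = some ⊥) :
    ∃ (n : ℕ) (H : Fin (n + 1) → Subgroup G), IsMaximalSubgroupChain H ∧ chainCost H ≤ c := by
  have hne : l ≠ [] := by rintro rfl; simp at hh
  have hlen : l.length = (l.length - 1) + 1 := by
    have := List.length_pos_iff.mpr hne; omega
  refine ⟨l.length - 1, fun i => l.get (Fin.cast hlen.symm i), ⟨?_, ?_, ?_⟩, ?_⟩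
  · obtain ⟨a, t, rfl⟩ : ∃ a t, l = a :: t := by
      cases l with
      | nil => simp at hh
      | cons a t => exact ⟨a, t, rfl⟩
    simpa using hh
  · rw [List.getLast?_eq_getLast_of_ne_nil hne, Option.some_inj] at hla
    rw [← hla, List.getLast_eq_getElem]
    rfl
  · intro i
    have := List.isChain_iff_getElem.mp hl i (by have := i.isLt; omega)
    exact ⟨this.1.lt, fun K hK => this.1.2 hK.1 hK.2⟩
  · exact Finset.sup_le fun i _ => (List.isChain_iff_getElem.mp hl i (by have := i.isLt; omega)).2

lemma width_le_of_list {c : ℕ} {l : List (Subgroup G)}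
    (hl : l.IsChain (fun x y => y ⋖ x ∧ y.relIndex x ≤ c))
    (hh : l.head? = some ⊤) (hla : l.getLast? = some ⊥) : galoisWidth G ≤ c := by
  obtain ⟨n, H, hmax, hc⟩ := chain_of_list hl hh hla
  exact le_trans (Nat.sInf_le ⟨n, H, hmax, rfl⟩) hc

end Conv

section OfFn
variable {α : Type*}

lemma chain'_ofFn {R : α → α → Prop} {n : ℕ} (H : Fin (n + 1) → α)
    (h : ∀ i : Fin n, R (H i.castSucc) (H i.succ)) : (List.ofFn H).IsChain R := by
  rw [List.isChain_iff_getElem]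
  intro i hi
  rw [List.length_ofFn] at hi
  rw [List.getElem_ofFn, List.getElem_ofFn]
  have hi' : i < n := by omega
  exact h ⟨i, hi'⟩

lemma head?_ofFn {n : ℕ} (H : Fin (n + 1) → α) : (List.ofFn H).head? = some (H 0) := by
  rw [List.ofFn_succ]; rfl

lemma getLast?_ofFn {n : ℕ} (H : Fin (n + 1) → α) :
    (List.ofFn H).getLast? = some (H (Fin.last n)) := by
  have hne : List.ofFn H ≠ [] := by simp [← List.length_pos_iff]
  rw [List.getLast?_eq_getLast_of_ne_nil hne, Option.some_inj, List.getLast_eq_getElem,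
    List.getElem_ofFn]
  congr 1
  ext
  simp
end OfFn

section Mono
variable {G : Type*} [Group G]

lemma exists_list_of_mono [Finite G] {c : ℕ} :
    ∀ (m : ℕ) (K : Fin (m + 1) → Subgroup G),
      (∀ i : Fin m, K i.succ ≤ K i.castSucc ∧ (K i.succ).relIndex (K i.castSucc) ≤ c) →
      ∃ l : List (Subgroup G), l.IsChain (fun x y => y ⋖ x ∧ y.relIndex x ≤ c) ∧
        l.head? = some (K 0) ∧ l.getLast? = some (K (Fin.last m)) := by
  intro m
  induction m with
  | zero => exact fun K _ => ⟨[K 0], List.isChain_singleton _, rfl, rfl⟩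
  | succ m ih =>
    intro K hK
    obtain ⟨l2, hl2, hh2, hla2⟩ := ih (fun i => K i.succ)
      (fun i => by simpa only [Fin.succ_castSucc] using hK i.succ)
    have h0 := hK 0
    obtain ⟨l1, hl1, hh1, hla1⟩ := exists_cov_chain ((K (0 : Fin (m+1)).succ).relIndex
      (K (0 : Fin (m+1)).castSucc)) _ _ h0.1 rfl
    have hl1' : l1.IsChain (fun x y => y ⋖ x ∧ y.relIndex x ≤ c) := by
      refine hl1.imp fun a b hab => ⟨hab.1, le_trans (Nat.le_of_dvd ?_ hab.2) h0.2⟩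
      exact Nat.pos_of_ne_zero (relindex_ne_zero' _ _)
    have hx2 : l2.head? = some (K (0 : Fin (m+1)).succ) := hh2
    obtain ⟨hc, hh, hla⟩ := chain'_glue hl1' hl2 hla1 hx2
    refine ⟨l1 ++ l2.tail, hc, ?_, ?_⟩
    · have e0 : (Fin.castSucc (0 : Fin (m + 1))) = (0 : Fin (m + 2)) := Fin.ext (by simp)
      rw [hh, hh1, e0]
    · rw [hla, hla2, Fin.succ_last]
end Mono

section Width
variable {G : Type*} [Group G]

lemma width_le_of_mono [Finite G] {c : ℕ} {m : ℕ} (K : Fin (m + 1) → Subgroup G)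
    (hstep : ∀ i : Fin m, K i.succ ≤ K i.castSucc ∧ (K i.succ).relIndex (K i.castSucc) ≤ c)
    (h0 : K 0 = ⊤) (hm : K (Fin.last m) = ⊥) : galoisWidth G ≤ c := by
  obtain ⟨l, hl, hh, hla⟩ := exists_list_of_mono m K hstep
  exact width_le_of_list hl (h0 ▸ hh) (hm ▸ hla)

lemma widthSet_nonempty [Finite G] :
    {c : ℕ | ∃ (n : ℕ) (H : Fin (n + 1) → Subgroup G),
      IsMaximalSubgroupChain H ∧ chainCost H = c}.Nonempty := by
  obtain ⟨l, hl, hh, hla⟩ := exists_cov_chain ((⊥ : Subgroup G).relIndex ⊤) ⊥ ⊤ bot_le rfl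
  have hl' : l.IsChain (fun x y => y ⋖ x ∧ y.relIndex x ≤ (⊥ : Subgroup G).relIndex ⊤) :=
    hl.imp fun a b hab => ⟨hab.1, Nat.le_of_dvd
      (Nat.pos_of_ne_zero (relindex_ne_zero' _ _)) hab.2⟩
  obtain ⟨n, H, hmax, _⟩ := chain_of_list hl' hh hla
  exact ⟨chainCost H, n, H, hmax, rfl⟩

lemma exists_width_chain [Finite G] :
    ∃ (n : ℕ) (H : Fin (n + 1) → Subgroup G),
      IsMaximalSubgroupChain H ∧ chainCost H = galoisWidth G :=
  Nat.sInf_mem widthSet_nonempty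

end Width

section Transfer
variable {G : Type*} [Group G] (N : Subgroup G) [N.Normal]

local notation "f" => QuotientGroup.mk' N

lemma ker_le_comap' (A : Subgroup (G ⧸ N)) : (QuotientGroup.mk' N).ker ≤ comap f A := by
  rw [← MonoidHom.comap_bot]; exact comap_mono bot_le

lemma covby_comap_mk' {A B : Subgroup (G ⧸ N)} (h : A ⋖ B) : comap f A ⋖ comap f B := by
  have surj := QuotientGroup.mk'_surjective N
  constructor
  · exact (comap_lt_comap_of_surjective surj).mpr h.lt
  · intro C h1 h2
    have hCk : (QuotientGroup.mk' N).ker ≤ C := le_trans (ker_le_comap' N A) h1.le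
    have hCC : comap f (map f C) = C := by rw [comap_map_eq, sup_eq_left.mpr hCk]
    have hA : A < map f C := by
      refine lt_of_le_of_ne ?_ fun he => h1.ne ?_
      · rw [← map_comap_eq_self_of_surjective surj A]; exact map_mono h1.le
      · rw [he, hCC]
    have hB : map f C < B := by
      refine lt_of_le_of_ne ?_ fun he => h2.ne ?_
      · rw [← map_comap_eq_self_of_surjective surj B]; exact map_mono h2.le
      · rw [← hCC, he]
    exact h.2 hA hB

lemma relindex_comap_mk' (A B : Subgroup (G ⧸ N)) :
    (comap f A).relIndex (comap f B) = A.relIndex B := by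
  rw [Subgroup.relIndex_comap, map_comap_eq_self_of_surjective (QuotientGroup.mk'_surjective N)]

lemma subgroupOf_map_subtype_self (A : Subgroup ↥N) : (map N.subtype A).subgroupOf N = A := by
  rw [← comap_subtype, comap_map_eq_self_of_injective N.subtype_injective]

lemma covby_map_subtype {A B : Subgroup ↥N} (h : A ⋖ B) :
    map N.subtype A ⋖ map N.subtype B := by
  constructor
  · exact lt_of_le_of_ne (map_mono h.lt.le)
      fun he => h.lt.ne (map_injective N.subtype_injective he)
  · intro C h1 h2
    have hCN : C ≤ N := le_trans h2.le (map_subtype_le B)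
    have hC : map N.subtype (C.subgroupOf N) = C := by
      rw [subgroupOf_map_subtype, inf_eq_left.mpr hCN]
    have hA : A < C.subgroupOf N := by
      refine lt_of_le_of_ne ?_ fun he => h1.ne ?_
      · exact map_subtype_le_map_subtype.mp (by rw [hC]; exact h1.le)
      · rw [he, hC]
    have hB : C.subgroupOf N < B := by
      refine lt_of_le_of_ne ?_ fun he => h2.ne ?_
      · exact map_subtype_le_map_subtype.mp (by rw [hC]; exact h2.le)
      · rw [← hC, he]
    exact h.2 hA hB

lemma relindex_map_subtype (A B : Subgroup ↥N) :
    (map N.subtype A).relIndex (map N.subtype B) = A.relIndex B := by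
  rw [← Subgroup.relIndex_subgroupOf (map_subtype_le B), subgroupOf_map_subtype_self,
    subgroupOf_map_subtype_self]

end Transfer

lemma relindex_subgroupOf_le {G : Type*} [Group G] [Finite G] {N A B : Subgroup G} (hAB : A ≤ B) :
    (A.subgroupOf N).relIndex (B.subgroupOf N) ≤ A.relIndex B := by
  rw [← Subgroup.inf_subgroupOf_right A N, ← Subgroup.inf_subgroupOf_right B N,
    Subgroup.relIndex_subgroupOf (inf_le_right : B ⊓ N ≤ N)]
  have h1 : A ⊓ (B ⊓ N) = A ⊓ N := by rw [← inf_assoc, inf_eq_left.mpr hAB]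
  calc (A ⊓ N).relIndex (B ⊓ N) = (A ⊓ (B ⊓ N)).relIndex (B ⊓ N) := by rw [h1]
    _ = A.relIndex (B ⊓ N) := Subgroup.inf_relIndex_right A (B ⊓ N)
    _ ≤ A.relIndex B := Subgroup.relIndex_le_of_le_right inf_le_left (relindex_ne_zero' A B)

lemma relindex_map_mk'_le {G : Type*} [Group G] [Finite G] {N : Subgroup G} [N.Normal]
    {A B : Subgroup G} (hAB : A ≤ B) :
    (map (QuotientGroup.mk' N) A).relIndex (map (QuotientGroup.mk' N) B) ≤ A.relIndex B := by
  have h1 : (comap (QuotientGroup.mk' N) (map (QuotientGroup.mk' N) A)).relIndex B =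
      (map (QuotientGroup.mk' N) A).relIndex (map (QuotientGroup.mk' N) B) :=
    Subgroup.relIndex_comap (Subgroup.map (QuotientGroup.mk' N) A) (QuotientGroup.mk' N) B
  rw [← h1, Subgroup.comap_map_eq]
  exact Nat.le_of_dvd (Nat.pos_of_ne_zero (relindex_ne_zero' A B))
    (Subgroup.relIndex_dvd_of_le_left B le_sup_left)

lemma le_chainCost {G : Type*} [Group G] {n : ℕ} (H : Fin (n + 1) → Subgroup G) (i : Fin n) :
    (H i.succ).relIndex (H i.castSucc) ≤ chainCost H := by
  have := Finset.le_sup (α := ℕ) (f := fun j : Fin n => (H j.succ).relIndex (H j.castSucc))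
    (Finset.mem_univ i)
  exact this


/-- For a finite group `G` and a normal subgroup `N ⊴ G`, the Galois width
satisfies `B(G) = max (B(G/N)) (B(N))`. -/
theorem stmt7 (G : Type*) [Group G] [Finite G] (N : Subgroup G) [N.Normal] :
    galoisWidth G = max (galoisWidth (G ⧸ N)) (galoisWidth ↥N) := by
  refine le_antisymm ?_ (max_le ?_ ?_)
  · -- galoisWidth G ≤ max
    set c := max (galoisWidth (G ⧸ N)) (galoisWidth ↥N) with hc
    obtain ⟨n1, Hq, ⟨hq0, hqlast, hqstep⟩, hcq⟩ := exists_width_chain (G := G ⧸ N)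
    obtain ⟨n2, Hn, ⟨hn0, hnlast, hnstep⟩, hcn⟩ := exists_width_chain (G := ↥N)
    have hl1 : (List.ofFn fun i => comap (QuotientGroup.mk' N) (Hq i)).IsChain
        (fun x y => y ⋖ x ∧ y.relIndex x ≤ c) := by
      refine chain'_ofFn _ fun i => ⟨?_, ?_⟩
      · exact covby_comap_mk' N ⟨(hqstep i).1, fun K h1 h2 => (hqstep i).2 K ⟨h1, h2⟩⟩
      · rw [relindex_comap_mk']
        calc (Hq i.succ).relIndex (Hq i.castSucc) ≤ chainCost Hq := le_chainCost Hq i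
          _ ≤ c := by rw [hcq]; exact le_max_left _ _
    have hl2 : (List.ofFn fun i => map N.subtype (Hn i)).IsChain
        (fun x y => y ⋖ x ∧ y.relIndex x ≤ c) := by
      refine chain'_ofFn _ fun i => ⟨?_, ?_⟩
      · exact covby_map_subtype N ⟨(hnstep i).1, fun K h1 h2 => (hnstep i).2 K ⟨h1, h2⟩⟩
      · rw [relindex_map_subtype]
        calc (Hn i.succ).relIndex (Hn i.castSucc) ≤ chainCost Hn := le_chainCost Hn i
          _ ≤ c := by rw [hcn]; exact le_max_right _ _
    have hla1 : (List.ofFn fun i => comap (QuotientGroup.mk' N) (Hq i)).getLast? = some N := by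
      rw [getLast?_ofFn, hqlast, MonoidHom.comap_bot, QuotientGroup.ker_mk']
    have hh2 : (List.ofFn fun i => map N.subtype (Hn i)).head? = some N := by
      rw [head?_ofFn, hn0, ← MonoidHom.range_eq_map, Subgroup.range_subtype]
    obtain ⟨hcg, hhg, hlag⟩ := chain'_glue hl1 hl2 hla1 hh2
    refine width_le_of_list hcg ?_ ?_
    · rw [hhg, head?_ofFn, hq0, Subgroup.comap_top]
    · rw [hlag, getLast?_ofFn, hnlast, Subgroup.map_bot]
  · -- galoisWidth (G ⧸ N) ≤ galoisWidth G
    obtain ⟨n, H, ⟨h0, hlast, hstep⟩, hcH⟩ := exists_width_chain (G := G)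
    refine width_le_of_mono (fun i => map (QuotientGroup.mk' N) (H i)) (fun i => ?_) ?_ ?_
    · refine ⟨map_mono (hstep i).1.le, ?_⟩
      calc (map (QuotientGroup.mk' N) (H i.succ)).relIndex (map (QuotientGroup.mk' N)
            (H i.castSucc)) ≤ (H i.succ).relIndex (H i.castSucc) :=
            relindex_map_mk'_le (hstep i).1.le
        _ ≤ chainCost H := le_chainCost H i
        _ = galoisWidth G := hcH
    · show Subgroup.map (QuotientGroup.mk' N) (H 0) = ⊤
      rw [h0]; exact map_top_of_surjective _ (QuotientGroup.mk'_surjective N)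
    · show Subgroup.map (QuotientGroup.mk' N) (H (Fin.last n)) = ⊥
      rw [hlast]; exact Subgroup.map_bot _
  · -- galoisWidth ↥N ≤ galoisWidth G
    obtain ⟨n, H, ⟨h0, hlast, hstep⟩, hcH⟩ := exists_width_chain (G := G)
    refine width_le_of_mono (fun i => (H i).subgroupOf N) (fun i => ?_) ?_ ?_
    · refine ⟨?_, ?_⟩
      · show (H i.succ).subgroupOf N ≤ (H i.castSucc).subgroupOf N
        rw [← comap_subtype, ← comap_subtype]; exact comap_mono (hstep i).1.le
      · calc ((H i.succ).subgroupOf N).relIndex ((H i.castSucc).subgroupOf N)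
            ≤ (H i.succ).relIndex (H i.castSucc) := relindex_subgroupOf_le (hstep i).1.le
          _ ≤ chainCost H := le_chainCost H i
          _ = galoisWidth G := hcH
    · show (H 0).subgroupOf N = ⊤
      rw [h0]; exact Subgroup.top_subgroupOf N
    · show (H (Fin.last n)).subgroupOf N = ⊥
      rw [hlast]; exact Subgroup.bot_subgroupOf N
end

section
/- Let G be a group with subgroups H_{i+1} ≤ H_i ≤ G and a normal subgroup N ⊴ G, all of finite index. Then [H_i : H_{i+1}] = [H_i ∩ N : H_{i+1} ∩ N] · [N H_i : N H_{i+1}]. -/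
/-- For subgroups `H₂ ≤ H₁` of `G` and a normal subgroup `N ⊴ G`, all of finite
index, `[H₁ : H₂] = [H₁ ∩ N : H₂ ∩ N] · [N H₁ : N H₂]`. -/
theorem stmt9 (G : Type*) [Group G] (N H₁ H₂ : Subgroup G) [N.Normal]
    [H₁.FiniteIndex] [H₂.FiniteIndex] [N.FiniteIndex] (h : H₂ ≤ H₁) :
    H₂.relIndex H₁ = (H₂ ⊓ N).relIndex (H₁ ⊓ N) * (N ⊔ H₂).relIndex (N ⊔ H₁) := by
  open Subgroup in
  have hne : N.relIndex H₂ ≠ 0 := by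
    have h1 : (N ⊓ H₂).relIndex H₂ * H₂.index = (N ⊓ H₂).index :=
      Subgroup.relIndex_mul_index inf_le_right
    have h2 : (N ⊓ H₂).index ≠ 0 := Subgroup.FiniteIndex.index_ne_zero
    have h3 : (N ⊓ H₂).relIndex H₂ ≠ 0 := by
      intro h0
      rw [h0, zero_mul] at h1
      exact h2 h1.symm
    rwa [Subgroup.inf_relIndex_right] at h3
  have e1 : (H₂ ⊓ N).relIndex H₂ * H₂.relIndex H₁ = (H₂ ⊓ N).relIndex H₁ :=
    Subgroup.relIndex_mul_relIndex _ _ _ inf_le_left h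
  have e2 : (H₂ ⊓ N).relIndex (H₁ ⊓ N) * (H₁ ⊓ N).relIndex H₁ = (H₂ ⊓ N).relIndex H₁ :=
    Subgroup.relIndex_mul_relIndex _ _ _ (inf_le_inf_right N h) inf_le_left
  have e3 : N.relIndex (N ⊔ H₂) * (N ⊔ H₂).relIndex (N ⊔ H₁) = N.relIndex (N ⊔ H₁) :=
    Subgroup.relIndex_mul_relIndex _ _ _ le_sup_left (sup_le_sup_left h N)
  rw [Subgroup.relIndex_sup_left, Subgroup.relIndex_sup_left] at e3
  have e4 : (H₁ ⊓ N).relIndex H₁ = N.relIndex H₁ := by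
    rw [inf_comm, Subgroup.inf_relIndex_right]
  have e5 : (H₂ ⊓ N).relIndex H₂ = N.relIndex H₂ := by
    rw [inf_comm, Subgroup.inf_relIndex_right]
  rw [e5] at e1
  apply mul_left_cancel₀ hne
  rw [e1, ← e2, e4, ← e3]
  ring
end

section
/- If G is a finite simple group, then its Galois width equals its minimal faithful permutation degree: B(G) = μ(G). -/
/-- The minimal faithful permutation degree of a group `G`: the least `d` such that `G` embeds
into the symmetric group `S_d`. -/
noncomputable def minFaithfulDegree (G : Type*) [Group G] : ℕ :=
  sInf {d : ℕ | ∃ φ : G →* Equiv.Perm (Fin d), Function.Injective φ}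

/-- Conjugation by an equivalence, as a monoid hom between permutation groups. -/
def permCongrHom {α β : Type*} (e : α ≃ β) : Equiv.Perm α →* Equiv.Perm β where
  toFun p := e.permCongr p
  map_one' := by ext x; simp
  map_mul' p q := by ext x; simp

lemma permCongrHom_injective {α β : Type*} (e : α ≃ β) :
    Function.Injective (permCongrHom e) := e.permCongr.injective

/-- Any proper subgroup of a finite simple group yields a faithful permutation
representation of degree its index. -/
lemma exists_inj_of_ne_top {G : Type*} [Group G] [Finite G] [IsSimpleGroup G]
    {K : Subgroup G} (hK : K ≠ ⊤) :
    ∃ φ : G →* Equiv.Perm (Fin K.index), Function.Injective φ := by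
  classical
  let f := MulAction.toPermHom G (G ⧸ K)
  have hker : f.ker = ⊥ := by
    have h1 : K.normalCore = f.ker := Subgroup.normalCore_eq_ker K
    rcases IsSimpleGroup.eq_bot_or_eq_top_of_normal K.normalCore K.normalCore_normal with h | h
    · rw [← h1, h]
    · exact absurd (le_antisymm le_top (h ▸ K.normalCore_le)) hK
  have hfinj : Function.Injective f := by
    rw [← MonoidHom.ker_eq_bot_iff] at *; exact hker
  have hcard : Nat.card (G ⧸ K) = K.index := rfl
  let e : (G ⧸ K) ≃ Fin K.index := Finite.equivFinOfCardEq hcard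
  exact ⟨(permCongrHom e).comp f, (permCongrHom_injective e).comp hfinj⟩

/-- A nontrivial finite group with a faithful degree-`d` representation has a proper
subgroup of index at most `d`. -/
lemma exists_proper_index_le {H : Type*} [Group H] [Finite H] [Nontrivial H] {d : ℕ}
    (φ : H →* Equiv.Perm (Fin d)) (hφ : Function.Injective φ) :
    ∃ K : Subgroup H, K ≠ ⊤ ∧ K.index ≤ d := by
  classical
  obtain ⟨h, hh⟩ := exists_ne (1 : H)
  have hφh : φ h ≠ 1 := fun e => hh (hφ (e.trans (map_one φ).symm))
  obtain ⟨x, hx⟩ : ∃ x, φ h x ≠ x := by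
    by_contra hc
    push_neg at hc
    exact hφh (Equiv.ext hc)
  letI : MulAction H (Fin d) := MulAction.compHom _ φ
  refine ⟨MulAction.stabilizer H x, ?_, ?_⟩
  · intro ht
    have hmem : h ∈ MulAction.stabilizer H x := ht ▸ Subgroup.mem_top h
    exact hx hmem
  · rw [MulAction.index_stabilizer]
    calc (MulAction.orbit H x).ncard ≤ (Set.univ : Set (Fin d)).ncard :=
          Set.ncard_le_ncard (Set.subset_univ _) Set.finite_univ
      _ = d := by simp [Set.ncard_univ]

lemma exists_cov_step {G : Type*} [Group G] [Finite G] {d : ℕ}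
    (φ : G →* Equiv.Perm (Fin d)) (hφ : Function.Injective φ)
    {H : Subgroup G} (hH : H ≠ ⊥) :
    ∃ K : Subgroup G, (K < H ∧ ∀ L : Subgroup G, ¬(K < L ∧ L < H)) ∧ K.relIndex H ≤ d := by
  classical
  haveI : Nontrivial H := (Subgroup.nontrivial_iff_ne_bot H).mpr hH
  obtain ⟨K', hK', hle⟩ :=
    exists_proper_index_le (φ.comp H.subtype) (hφ.comp H.subtype_injective)
  obtain ⟨M', hM', hKM'⟩ := (eq_top_or_exists_le_coatom K').resolve_left hK'
  have hMle : M'.index ≤ d :=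
    le_trans (Nat.le_of_dvd (Nat.pos_of_ne_zero K'.index_ne_zero_of_finite)
      (Subgroup.index_dvd_of_le hKM')) hle
  refine ⟨M'.map H.subtype, ⟨?_, ?_⟩, ?_⟩
  · refine lt_of_le_of_ne (Subgroup.map_subtype_le M') fun he => ?_
    have : M' = ⊤ := by
      have h2 := congrArg (Subgroup.comap H.subtype) he
      rw [Subgroup.comap_map_eq_self_of_injective H.subtype_injective] at h2
      rw [h2]; exact Subgroup.subgroupOf_self H
    exact hM'.1 this
  · rintro L ⟨h1, h2⟩
    set L' : Subgroup H := L.comap H.subtype with hL'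
    have hLle : L ≤ H := h2.le
    have hmapL : L'.map H.subtype = L := by
      rw [hL', ← Subgroup.subgroupOf, Subgroup.subgroupOf_map_subtype, inf_eq_left.mpr hLle]
    have hlt : M' < L' := by
      refine lt_of_le_of_ne ?_ fun he => ?_
      · have := Subgroup.comap_mono (f := H.subtype) h1.le
        rwa [Subgroup.comap_map_eq_self_of_injective H.subtype_injective] at this
      · rw [← he] at hmapL
        exact h1.ne hmapL
    have : L' = ⊤ := hM'.2 L' hlt
    rw [this] at hmapL
    have : L = H := by
      rw [← hmapL, ← MonoidHom.range_eq_map, Subgroup.range_subtype]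
    exact h2.ne this
  · rw [Subgroup.relIndex, Subgroup.subgroupOf,
      Subgroup.comap_map_eq_self_of_injective H.subtype_injective]
    exact hMle

lemma subgroup_card_lt {G : Type*} [Group G] [Finite G] {K H : Subgroup G} (h : K < H) :
    Nat.card K < Nat.card H := by
  have hs : (K : Set G) ⊂ (H : Set G) := SetLike.coe_ssubset_coe.mpr h
  have := Set.ncard_lt_ncard hs (Set.toFinite _)
  rw [← Nat.card_coe_set_eq, ← Nat.card_coe_set_eq] at this
  exact this

lemma exists_chain_from {G : Type*} [Group G] [Finite G] {d : ℕ}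
    (φ : G →* Equiv.Perm (Fin d)) (hφ : Function.Injective φ) :
    ∀ m : ℕ, ∀ H : Subgroup G, Nat.card H = m →
    ∃ (n : ℕ) (C : Fin (n + 1) → Subgroup G), C 0 = H ∧ C (Fin.last n) = ⊥ ∧
      ∀ i : Fin n, (C i.succ < C i.castSucc ∧
          ∀ K : Subgroup G, ¬(C i.succ < K ∧ K < C i.castSucc)) ∧
        (C i.succ).relIndex (C i.castSucc) ≤ d := by
  intro m
  induction m using Nat.strong_induction_on with
  | _ m IH =>
    intro H hm
    by_cases hH : H = ⊥
    · exact ⟨0, fun _ => ⊥, by rw [hH], rfl, fun i => i.elim0⟩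
    · obtain ⟨K, hcov, hrel⟩ := exists_cov_step φ hφ hH
      have hlt : Nat.card K < m := hm ▸ subgroup_card_lt hcov.1
      obtain ⟨n, C, hC0, hClast, hCstep⟩ := IH _ hlt K rfl
      refine ⟨n + 1, Fin.cons H C, Fin.cons_zero _ _, ?_, ?_⟩
      · rw [← Fin.succ_last, Fin.cons_succ]; exact hClast
      · intro i
        induction i using Fin.cases with
        | zero =>
          have h1 : (Fin.cons H C : Fin (n+2) → Subgroup G) (0 : Fin (n+1)).succ = K := by
            rw [Fin.cons_succ, hC0]
          have h2 : (Fin.cons H C : Fin (n+2) → Subgroup G) (0 : Fin (n+1)).castSucc = H := by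
            rw [Fin.castSucc_zero, Fin.cons_zero]
          rw [h1, h2]
          exact ⟨hcov, hrel⟩
        | succ j =>
          have h1 : (Fin.cons H C : Fin (n+2) → Subgroup G) j.succ.succ = C j.succ :=
            Fin.cons_succ _ _ _
          have h2 : (Fin.cons H C : Fin (n+2) → Subgroup G) j.succ.castSucc = C j.castSucc := by
            rw [← Fin.succ_castSucc, Fin.cons_succ]
          rw [h1, h2]
          exact hCstep j

/-- For a finite simple group `G`, the Galois width equals the minimal
faithful permutation degree: `B(G) = μ(G)`. -/
theorem stmt11 (G : Type*) [Group G] [Finite G] [IsSimpleGroup G] :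
    galoisWidth G = minFaithfulDegree G := by
  classical
  set Dset : Set ℕ := {d : ℕ | ∃ φ : G →* Equiv.Perm (Fin d), Function.Injective φ} with hDset
  have hDne : Dset.Nonempty := by
    refine ⟨Nat.card G, (permCongrHom (Finite.equivFin G)).comp (MulAction.toPermHom G G),
      (permCongrHom_injective _).comp ?_⟩
    exact fun a b hab => MulAction.toPerm_injective hab
  have hμmem : minFaithfulDegree G ∈ Dset := Nat.sInf_mem hDne
  obtain ⟨φ, hφ⟩ := hμmem
  -- construct a cheap maximal chain
  obtain ⟨n, C, hC0, hClast, hCstep⟩ :=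
    exists_chain_from φ hφ (Nat.card (⊤ : Subgroup G)) ⊤ rfl
  have hchain : IsMaximalSubgroupChain C := ⟨hC0, hClast, fun i => (hCstep i).1⟩
  have hcost : chainCost C ≤ minFaithfulDegree G :=
    Finset.sup_le fun i _ => (hCstep i).2
  set S : Set ℕ := {c : ℕ | ∃ (n : ℕ) (H : Fin (n + 1) → Subgroup G),
    IsMaximalSubgroupChain H ∧ chainCost H = c} with hS
  have hSne : S.Nonempty := ⟨chainCost C, n, C, hchain, rfl⟩
  have hle : galoisWidth G ≤ minFaithfulDegree G :=
    le_trans (Nat.sInf_le ⟨n, C, hchain, rfl⟩) hcost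
  -- lower bound
  obtain ⟨m, H, hHchain, hHcost⟩ := Nat.sInf_mem hSne
  have hge : minFaithfulDegree G ≤ galoisWidth G := by
    obtain ⟨hH0, hHlast, hHstep⟩ := hHchain
    cases m with
    | zero =>
      exfalso
      have : (⊤ : Subgroup G) = ⊥ := by rw [← hH0, ← hHlast]; rfl
      obtain ⟨g, hg⟩ := exists_ne (1 : G)
      have hg' : g ∈ (⊥ : Subgroup G) := by rw [← this]; exact Subgroup.mem_top g
      exact hg (Subgroup.mem_bot.mp hg')
    | succ k =>
      have h1 : H (0 : Fin (k + 1)).succ ≠ ⊤ := by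
        have := (hHstep 0).1
        rw [Fin.castSucc_zero, hH0] at this
        exact this.ne
      obtain ⟨ψ, hψ⟩ := exists_inj_of_ne_top h1
      have hμle : minFaithfulDegree G ≤ (H (0 : Fin (k + 1)).succ).index :=
        Nat.sInf_le ⟨ψ, hψ⟩
      have hrel : (H (0 : Fin (k + 1)).succ).relIndex (H (0 : Fin (k + 1)).castSucc)
          = (H (0 : Fin (k + 1)).succ).index := by
        rw [Fin.castSucc_zero, hH0, Subgroup.relIndex_top_right]
      have hsup : (H (0 : Fin (k + 1)).succ).relIndex (H (0 : Fin (k + 1)).castSucc)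
          ≤ chainCost H :=
        Finset.le_sup (f := fun i : Fin (k + 1) => (H i.succ).relIndex (H i.castSucc))
          (Finset.mem_univ (0 : Fin (k + 1)))
      calc minFaithfulDegree G ≤ (H (0 : Fin (k + 1)).succ).index := hμle
        _ ≤ chainCost H := by rw [← hrel] at *; exact hsup
        _ = galoisWidth G := hHcost
  exact le_antisymm hle hge
end

section
/- For n ≥ 5, the Galois width of the symmetric group S_n equals n. -/
open Equiv Equiv.Perm Subgroup Finset Nat

variable {α : Type*} [Fintype α] [DecidableEq α]

/-- The 3-cycle `c ↦ d ↦ e ↦ c`. -/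
private def tcy (c d e : α) : Equiv.Perm α := Equiv.swap c e * Equiv.swap c d

lemma tcy_c {c d e : α} (hcd : c ≠ d) (hce : c ≠ e) (hde : d ≠ e) : tcy c d e c = d := by
  simp [tcy, mul_apply, swap_apply_of_ne_of_ne, hcd.symm, hde]

lemma tcy_d {c d e : α} (hcd : c ≠ d) (hce : c ≠ e) (hde : d ≠ e) : tcy c d e d = e := by
  simp [tcy, mul_apply, swap_apply_of_ne_of_ne, hcd.symm, hde]

lemma tcy_e {c d e : α} (hcd : c ≠ d) (hce : c ≠ e) (hde : d ≠ e) : tcy c d e e = c := by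
  simp [tcy, mul_apply, swap_apply_of_ne_of_ne, hce.symm, hde.symm]

lemma tcy_other {c d e x : α} (hxc : x ≠ c) (hxd : x ≠ d) (hxe : x ≠ e) : tcy c d e x = x := by
  simp [tcy, mul_apply, swap_apply_of_ne_of_ne, hxc, hxd, hxe]

lemma tcy_mem {c d e : α} (hcd : c ≠ d) (hce : c ≠ e) : tcy c d e ∈ alternatingGroup α := by
  simp [tcy, mem_alternatingGroup, sign_swap, hcd, hce]
set_option linter.unusedSectionVars false
set_option linter.unusedVariables false
set_option maxHeartbeats 1000000

lemma minimal_is_threeCycle (h5 : 5 ≤ Fintype.card α) (N : Subgroup (Perm α))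
    (hNA : N ≤ alternatingGroup α)
    (hconj : ∀ g ∈ N, ∀ τ ∈ alternatingGroup α, τ * g * τ⁻¹ ∈ N)
    (g : Perm α) (hg : g ∈ N) (hg1 : g ≠ 1)
    (hmin : ∀ f ∈ N, f ≠ 1 → g.support.card ≤ f.support.card) :
    g.IsThreeCycle := by
  -- support has size at least 3
  have hm2 : 2 ≤ g.support.card := by
    rcases Nat.lt_or_ge g.support.card 2 with h | h
    · interval_cases h' : g.support.card
      · exact absurd (card_support_eq_zero.mp h') hg1
      · exact absurd h' (card_support_ne_one g)
    · exact h
  have hsign : Perm.sign g = 1 := mem_alternatingGroup.mp (hNA hg)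
  have hm3 : 3 ≤ g.support.card := by
    rcases Nat.lt_or_ge g.support.card 3 with h | h
    · have h2 : g.support.card = 2 := le_antisymm (by omega) hm2
      obtain ⟨x, y, hxy, rfl⟩ := card_support_eq_two.mp h2
      rw [sign_swap hxy] at hsign
      exact absurd hsign (by decide)
    · exact h
  rcases Nat.lt_or_ge g.support.card 4 with h4 | h4
  · exact card_support_eq_three_iff.mp (le_antisymm (by omega) hm3)
  -- now 4 ≤ card support; derive a contradiction
  exfalso
  by_cases hsq : ∀ x, g (g x) = x
  · -- Case 2 : g is an involution
    obtain ⟨a, ha⟩ : ∃ a, a ∈ g.support := by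
      have : g.support.Nonempty := Finset.card_pos.mp (by omega)
      exact this
    set b := g a with hb
    have hba : b ≠ a := mem_support.mp ha
    have hgb : g b = a := hsq a
    have hbs : b ∈ g.support := apply_mem_support.mpr ha
    -- pick c in support distinct from a, b
    obtain ⟨c, hc⟩ : ∃ c, c ∈ g.support \ {a, b} := by
      have hsub : ({a, b} : Finset α) ⊆ g.support := by
        intro x hx; simp at hx; rcases hx with rfl | rfl <;> assumption
      have : 0 < (g.support \ {a, b}).card := by
        have := Finset.card_sdiff_of_subset hsub
        have hab2 : ({a, b} : Finset α).card ≤ 2 := Finset.card_insert_le _ _ |>.trans (by simp)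
        omega
      exact Finset.card_pos.mp this
    rw [Finset.mem_sdiff, Finset.mem_insert, Finset.mem_singleton] at hc
    push_neg at hc
    obtain ⟨hcs, hca, hcb⟩ := hc
    set d := g c with hd
    have hdc : d ≠ c := mem_support.mp hcs
    have hgd : g d = c := hsq c
    have hda : d ≠ a := fun h => hcb (g.injective (show g c = g b by rw [← hd, h, hgb]))
    have hdb : d ≠ b := fun h => hca (g.injective (show g c = g a by rw [← hd, h, hb]))
    have hds : d ∈ g.support := apply_mem_support.mpr hcs
    -- pick e outside {a, b, c, d}
    obtain ⟨e, he⟩ : ∃ e, e ∉ ({a, b, c, d} : Finset α) := by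
      by_contra hcon
      push_neg at hcon
      have : (Finset.univ : Finset α) ⊆ {a, b, c, d} := fun x _ => hcon x
      have := Finset.card_le_card this
      have h4' : ({a, b, c, d} : Finset α).card ≤ 4 := by
        apply (Finset.card_insert_le _ _).trans
        apply Nat.succ_le_succ
        apply (Finset.card_insert_le _ _).trans
        apply Nat.succ_le_succ
        exact (Finset.card_insert_le _ _).trans (by simp)
      rw [Finset.card_univ] at this
      omega
    simp only [Finset.mem_insert, Finset.mem_singleton] at he
    push_neg at he
    obtain ⟨hea, heb, hec, hed⟩ := he
    set τ := tcy c d e with hτ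
    have hcd : c ≠ d := hdc.symm
    have hce : c ≠ e := hec.symm
    have hde : d ≠ e := hed.symm
    have hτA : τ ∈ alternatingGroup α := tcy_mem hcd hce
    have hτc : τ c = d := tcy_c hcd hce hde
    have hτd : τ d = e := tcy_d hcd hce hde
    have hτe : τ e = c := tcy_e hcd hce hde
    have hτa : τ a = a := tcy_other hca.symm hda.symm hea.symm
    have hτb : τ b = b := tcy_other hcb.symm hdb.symm heb.symm
    set h := τ * g * τ⁻¹ * g⁻¹ with hh
    have hhN : h ∈ N := mul_mem (hconj g hg τ hτA) (inv_mem hg)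
    have hginvc : g⁻¹ c = d := by rw [Perm.inv_eq_iff_eq, hgd]
    have hginva : g⁻¹ a = b := by rw [Perm.inv_eq_iff_eq, hgb]
    have hginvb : g⁻¹ b = a := by rw [Perm.inv_eq_iff_eq, hb]
    have hτinvd : τ⁻¹ d = c := by rw [Perm.inv_eq_iff_eq, hτc]
    have hτinva : τ⁻¹ a = a := by rw [Perm.inv_eq_iff_eq, hτa]
    have hτinvb : τ⁻¹ b = b := by rw [Perm.inv_eq_iff_eq, hτb]
    have hhc : h c = e := by
      simp only [hh, mul_apply, hginvc, hτinvd, hd.symm, hτd]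
    have hh1 : h ≠ 1 := fun hcon => hec (by rw [← hhc, hcon, one_apply])
    have hha : h a = a := by simp only [hh, mul_apply, hginva, hτinvb, hgb, hτa]
    have hhb : h b = b := by simp only [hh, mul_apply, hginvb, hτinva, hb.symm, hτb]
    have hsupp : h.support ⊆ ((insert e g.support).erase a).erase b := by
      intro x hx
      rw [mem_support] at hx
      rw [Finset.mem_erase, Finset.mem_erase, Finset.mem_insert]
      refine ⟨fun hxb => hx (by rw [hxb, hhb]), fun hxa => hx (by rw [hxa, hha]), ?_⟩
      by_contra hcon
      push_neg at hcon
      obtain ⟨hxe, hxs⟩ := hcon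
      rw [mem_support] at hxs
      push_neg at hxs
      have hxc : x ≠ c := fun hxx => (mem_support.mp hcs) (hxx ▸ hxs)
      have hxd : x ≠ d := fun hxx => (mem_support.mp hds) (hxx ▸ hxs)
      have hτx : τ x = x := tcy_other hxc hxd hxe
      have hτinvx : τ⁻¹ x = x := by rw [Perm.inv_eq_iff_eq, hτx]
      have hginvx : g⁻¹ x = x := by rw [Perm.inv_eq_iff_eq, hxs]
      exact hx (by simp only [hh, mul_apply, hginvx, hτinvx, hxs, hτx])
    have hcard : h.support.card ≤ g.support.card - 1 := by
      have h1 := Finset.card_le_card hsupp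
      have hbmem : b ∈ (insert e g.support).erase a :=
        Finset.mem_erase.mpr ⟨hba, Finset.mem_insert.mpr (Or.inr hbs)⟩
      have hamem : a ∈ insert e g.support := Finset.mem_insert.mpr (Or.inr ha)
      rw [Finset.card_erase_of_mem hbmem, Finset.card_erase_of_mem hamem] at h1
      have := Finset.card_insert_le e g.support
      omega
    have := hmin h hhN hh1
    omega
  · -- Case 1 : g has a cycle of length at least 3
    push_neg at hsq
    obtain ⟨a, ha⟩ := hsq
    have haa : g a ≠ a := fun h => ha (by rw [h, h])
    have has : a ∈ g.support := mem_support.mpr haa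
    set b := g a with hb
    have hba : b ≠ a := haa
    set c := g b with hc
    have hca : c ≠ a := ha
    have hbs : b ∈ g.support := apply_mem_support.mpr has
    have hcb : c ≠ b := fun h => (mem_support.mp hbs) (hc.symm.trans h)
    have hcs : c ∈ g.support := apply_mem_support.mpr hbs
    rcases Nat.lt_or_ge g.support.card 5 with h5' | h5'
    · -- card = 4 : g must be a 4-cycle, contradicting evenness
      have hm4 : g.support.card = 4 := by omega
      have habc : ({a, b, c} : Finset α) ⊆ g.support := by
        intro x hx; simp only [Finset.mem_insert, Finset.mem_singleton] at hx
        rcases hx with rfl | rfl | rfl <;> assumption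
      have hcard3 : ({a, b, c} : Finset α).card = 3 := by
        rw [Finset.card_insert_of_notMem (by simp [hba.symm, hca.symm]),
          Finset.card_insert_of_notMem (by simp [hcb.symm]), Finset.card_singleton]
      obtain ⟨d, hd⟩ : ∃ d, d ∈ g.support \ ({a, b, c} : Finset α) := by
        apply Finset.card_pos.mp
        rw [Finset.card_sdiff_of_subset habc, hcard3, hm4]
        omega
      rw [Finset.mem_sdiff, Finset.mem_insert, Finset.mem_insert, Finset.mem_singleton] at hd
      push_neg at hd
      obtain ⟨hds, hda, hdb, hdc⟩ := hd
      have hsupp4 : g.support = {a, b, c, d} := by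
        apply Finset.eq_of_superset_of_card_ge
        · intro x hx
          simp only [Finset.mem_insert, Finset.mem_singleton] at hx
          rcases hx with rfl | rfl | rfl | rfl <;> assumption
        · rw [hm4]
          rw [Finset.card_insert_of_notMem (by simp [hba.symm, hca.symm, hda.symm]),
            Finset.card_insert_of_notMem (by simp [hcb.symm, hdb.symm]),
            Finset.card_insert_of_notMem (by simp [hdc.symm]), Finset.card_singleton]
      have hmemssupp : ∀ x, x ∈ g.support ↔ (x = a ∨ x = b ∨ x = c ∨ x = d) := by
        intro x; rw [hsupp4]; simp
      -- determine g on c and d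
      have hgc : g c = d := by
        have h1 : g c ∈ g.support := apply_mem_support.mpr hcs
        have h2 : g c ≠ c := mem_support.mp hcs
        have h3 : g c ≠ b := fun h => hca (g.injective (h.trans hb))
        rcases (hmemssupp _).mp h1 with h | h | h | h
        · -- g c = a : then d must be fixed, contradiction
          exfalso
          have hgd : g d ∈ g.support := apply_mem_support.mpr hds
          have e1 : g d ≠ b := fun hh => hda (g.injective (hh.trans hb))
          have e2 : g d ≠ c := fun hh => hdb (g.injective (hh.trans hc))
          have e3 : g d ≠ a := fun hh => hdc (g.injective (hh.trans h.symm))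
          have e4 : g d ≠ d := mem_support.mp hds
          rcases (hmemssupp _).mp hgd with hh | hh | hh | hh
          exacts [e3 hh, e1 hh, e2 hh, e4 hh]
        · exact absurd h h3
        · exact absurd h h2
        · exact h
      have hgd : g d = a := by
        have h1 : g d ∈ g.support := apply_mem_support.mpr hds
        have e1 : g d ≠ b := fun hh => hda (g.injective (hh.trans hb))
        have e2 : g d ≠ c := fun hh => hdb (g.injective (hh.trans hc))
        have e4 : g d ≠ d := mem_support.mp hds
        rcases (hmemssupp _).mp h1 with hh | hh | hh | hh
        exacts [hh, absurd hh e1, absurd hh e2, absurd hh e4]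
      -- g is the 4-cycle (a b c d), which is odd
      have hgeq : g = Equiv.swap a d * Equiv.swap a c * Equiv.swap a b := by
        ext x
        by_cases hxa : x = a
        · subst hxa
          rw [mul_apply, mul_apply, swap_apply_left,
            swap_apply_of_ne_of_ne hba hcb.symm, swap_apply_of_ne_of_ne hba hdb.symm, ← hb]
        · by_cases hxb : x = b
          · subst hxb
            rw [mul_apply, mul_apply, swap_apply_right, swap_apply_left,
              swap_apply_of_ne_of_ne hca hdc.symm, ← hc]
          · by_cases hxc : x = c
            · subst hxc
              rw [mul_apply, mul_apply, swap_apply_of_ne_of_ne hca hcb, swap_apply_right,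
                swap_apply_left, hgc]
            · by_cases hxd : x = d
              · subst hxd
                rw [mul_apply, mul_apply, swap_apply_of_ne_of_ne hda hdb,
                  swap_apply_of_ne_of_ne hda hdc, swap_apply_right, hgd]
              · have hxs : x ∉ g.support := by
                  rw [hmemssupp]; push_neg; exact ⟨hxa, hxb, hxc, hxd⟩
                rw [notMem_support] at hxs
                rw [hxs, mul_apply, mul_apply, swap_apply_of_ne_of_ne hxa hxb,
                  swap_apply_of_ne_of_ne hxa hxc, swap_apply_of_ne_of_ne hxa hxd]
      rw [hgeq] at hsign
      rw [map_mul, map_mul, sign_swap (fun h => hda h.symm), sign_swap (fun h => hca h.symm),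
        sign_swap (fun h => hba h.symm)] at hsign
      exact absurd hsign (by decide)
    · -- card ≥ 5 : standard commutator argument
      obtain ⟨d, hd, e, he, hde⟩ : ∃ d ∈ g.support \ ({a, b, c} : Finset α),
          ∃ e ∈ g.support \ ({a, b, c} : Finset α), d ≠ e := by
        apply Finset.one_lt_card.mp
        have habc : ({a, b, c} : Finset α) ⊆ g.support := by
          intro x hx; simp only [Finset.mem_insert, Finset.mem_singleton] at hx
          rcases hx with rfl | rfl | rfl <;> assumption
        have hcard3 : ({a, b, c} : Finset α).card ≤ 3 := by
          apply (Finset.card_insert_le _ _).trans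
          apply Nat.succ_le_succ
          exact (Finset.card_insert_le _ _).trans (by simp)
        rw [Finset.card_sdiff_of_subset habc]
        omega
      rw [Finset.mem_sdiff, Finset.mem_insert, Finset.mem_insert, Finset.mem_singleton] at hd he
      push_neg at hd he
      obtain ⟨hds, hda, hdb, hdc⟩ := hd
      obtain ⟨hes, hea, heb, hec⟩ := he
      set τ := tcy c d e with hτ
      have hcd : c ≠ d := hdc.symm
      have hce : c ≠ e := hec.symm
      have hτA : τ ∈ alternatingGroup α := tcy_mem hcd hce
      have hτc : τ c = d := tcy_c hcd hce hde
      have hτa : τ a = a := tcy_other hca.symm hda.symm hea.symm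
      have hτb : τ b = b := tcy_other hcb.symm hdb.symm heb.symm
      set h := τ * g * τ⁻¹ * g⁻¹ with hh
      have hhN : h ∈ N := mul_mem (hconj g hg τ hτA) (inv_mem hg)
      have hginvb : g⁻¹ b = a := by rw [Perm.inv_eq_iff_eq, hb]
      have hginvc : g⁻¹ c = b := by rw [Perm.inv_eq_iff_eq, hc]
      have hτinva : τ⁻¹ a = a := by rw [Perm.inv_eq_iff_eq, hτa]
      have hτinvb : τ⁻¹ b = b := by rw [Perm.inv_eq_iff_eq, hτb]
      have hhc : h c = d := by
        simp only [hh, mul_apply, hginvc, hτinvb, hc.symm, hτc]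
      have hh1 : h ≠ 1 := fun hcon => hdc (show d = c by rw [← hhc, hcon, one_apply])
      have hhb : h b = b := by simp only [hh, mul_apply, hginvb, hτinva, hb.symm, hτb]
      have hsupp : h.support ⊆ g.support.erase b := by
        intro x hx
        rw [mem_support] at hx
        rw [Finset.mem_erase]
        refine ⟨fun hxb => hx (by rw [hxb, hhb]), ?_⟩
        by_contra hxs
        rw [notMem_support] at hxs
        have hxc : x ≠ c := fun hxx => (mem_support.mp hcs) (hxx ▸ hxs)
        have hxd : x ≠ d := fun hxx => (mem_support.mp hds) (hxx ▸ hxs)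
        have hxe : x ≠ e := fun hxx => (mem_support.mp hes) (hxx ▸ hxs)
        have hτx : τ x = x := tcy_other hxc hxd hxe
        have hτinvx : τ⁻¹ x = x := by rw [Perm.inv_eq_iff_eq, hτx]
        have hginvx : g⁻¹ x = x := by rw [Perm.inv_eq_iff_eq, hxs]
        exact hx (by simp only [hh, mul_apply, hginvx, hτinvx, hxs, hτx])
      have hcard : h.support.card ≤ g.support.card - 1 := by
        have h1 := Finset.card_le_card hsupp
        rw [Finset.card_erase_of_mem hbs] at h1
        exact h1
      have := hmin h hhN hh1
      omega

theorem altSimpleGen (h5 : 5 ≤ Fintype.card α) : IsSimpleGroup (alternatingGroup α) := by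
  haveI : Nontrivial (alternatingGroup α) :=
    alternatingGroup.nontrivial_of_three_le_card (by rw [Nat.card_eq_fintype_card]; omega)
  constructor
  intro H hH
  by_cases hbot : H = ⊥
  · exact Or.inl hbot
  right
  obtain ⟨x, hxH, hx1⟩ : ∃ x ∈ H, x ≠ 1 := by
    by_contra hcon
    push_neg at hcon
    exact hbot ((Subgroup.eq_bot_iff_forall H).mpr hcon)
  set N : Subgroup (Perm α) := H.map (alternatingGroup α).subtype with hN
  have hNA : N ≤ alternatingGroup α := by
    rintro f ⟨y, hy, rfl⟩
    exact y.2
  have hconj : ∀ g ∈ N, ∀ τ ∈ alternatingGroup α, τ * g * τ⁻¹ ∈ N := by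
    rintro f ⟨y, hy, rfl⟩ τ hτ
    exact ⟨⟨τ, hτ⟩ * y * ⟨τ, hτ⟩⁻¹, hH.conj_mem y hy ⟨τ, hτ⟩, rfl⟩
  have hxN : (x : Perm α) ∈ N := ⟨x, hxH, rfl⟩
  have hxne : (x : Perm α) ≠ 1 := fun hc => hx1 (Subtype.ext hc)
  -- choose an element of minimal support
  set S : Set ℕ := {k : ℕ | ∃ f ∈ N, f ≠ 1 ∧ f.support.card = k} with hS
  have hSne : S.Nonempty := ⟨_, _, hxN, hxne, rfl⟩
  obtain ⟨g, hgN, hg1, hgcard⟩ := Nat.sInf_mem hSne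
  have hmin : ∀ f ∈ N, f ≠ 1 → g.support.card ≤ f.support.card := by
    intro f hf hf1
    rw [hgcard]
    exact Nat.sInf_le ⟨f, hf, hf1, rfl⟩
  have h3c : g.IsThreeCycle := minimal_is_threeCycle h5 N hNA hconj g hgN hg1 hmin
  obtain ⟨y, hyH, hyg⟩ := hgN
  have hyeq : y = ⟨g, h3c.mem_alternatingGroup⟩ := Subtype.ext hyg
  have := h3c.alternating_normalClosure (by rwa [Nat.card_eq_fintype_card])
  rw [eq_top_iff, ← this]
  exact normalClosure_le_normal (Set.singleton_subset_iff.mpr (by rw [← hyeq]; exact hyH))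

lemma index_ge_of_ne_top (h5 : 5 ≤ Fintype.card α) (K : Subgroup ↥(alternatingGroup α))
    (hK : K ≠ ⊤) : Fintype.card α ≤ K.index := by
  haveI : Nontrivial α := Fintype.one_lt_card_iff_nontrivial.mp (by omega)
  have hsimple := altSimpleGen (α := α) h5
  have hcore : K.normalCore = ⊥ ∨ K.normalCore = ⊤ :=
    hsimple.eq_bot_or_eq_top_of_normal K.normalCore K.normalCore_normal
  have hcorebot : K.normalCore = ⊥ := by
    rcases hcore with h | h
    · exact h
    · exact absurd (top_le_iff.mp (h ▸ K.normalCore_le)) hK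
  rw [Subgroup.normalCore_eq_ker] at hcorebot
  have hinj : Function.Injective (MulAction.toPermHom ↥(alternatingGroup α)
      (↥(alternatingGroup α) ⧸ K)) := (MonoidHom.ker_eq_bot_iff _).mp hcorebot
  have hcardle : Nat.card ↥(alternatingGroup α) ≤
      Nat.card (Perm (↥(alternatingGroup α) ⧸ K)) := Nat.card_le_card_of_injective _ hinj
  have hq : Nat.card (↥(alternatingGroup α) ⧸ K) = K.index := rfl
  haveI : Fintype (↥(alternatingGroup α) ⧸ K) := Fintype.ofFinite _
  haveI : DecidableEq (↥(alternatingGroup α) ⧸ K) := Classical.decEq _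
  have hperm : Nat.card (Perm (↥(alternatingGroup α) ⧸ K)) = (K.index)! := by
    rw [Nat.card_eq_fintype_card, Fintype.card_perm, ← Nat.card_eq_fintype_card, hq]
  have halt : 2 * Nat.card ↥(alternatingGroup α) = (Fintype.card α)! := by
    rw [Nat.card_eq_fintype_card, two_mul_card_alternatingGroup, Fintype.card_perm]
  by_contra hcon
  push_neg at hcon
  have hfact : (K.index)! ≤ (Fintype.card α - 1)! := Nat.factorial_le (by omega)
  have hfacteq : (Fintype.card α)! = Fintype.card α * (Fintype.card α - 1)! := by
    have : Fintype.card α = (Fintype.card α - 1) + 1 := by omega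
    rw [this, Nat.factorial_succ]
    congr 1 <;> omega
  have hpos : 0 < (Fintype.card α - 1)! := Nat.factorial_pos _
  rw [hperm] at hcardle
  nlinarith [hcardle, hfact, halt, hfacteq, hpos, h5]

lemma exists_step {m : ℕ} (P : Fin (m + 1) → Prop) (h0 : P 0) (hl : ¬ P (Fin.last m)) :
    ∃ i : Fin m, P i.castSucc ∧ ¬ P i.succ := by
  induction m with
  | zero => exact absurd h0 hl
  | succ m ih =>
    by_cases hm : P (Fin.castSucc (Fin.last m))
    · exact ⟨Fin.last m, hm, by rwa [Fin.succ_last]⟩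
    · obtain ⟨i, h1, h2⟩ := ih (fun j => P j.castSucc) h0 hm
      exact ⟨i.castSucc, h1, by rwa [Fin.succ_castSucc]⟩

/-- Every chain from `⊤` to `⊥` in `S_n` (`n ≥ 5`) has a step of relative index at least `n`. -/
lemma lower_bound {n m : ℕ} (hn : 5 ≤ n) (H : Fin (m + 1) → Subgroup (Perm (Fin n)))
    (h0 : H 0 = ⊤) (hl : H (Fin.last m) = ⊥) : n ≤ chainCost H := by
  set A := alternatingGroup (Fin n) with hA
  have hcard : Fintype.card (Fin n) = n := Fintype.card_fin n
  haveI : Nontrivial ↥A := alternatingGroup.nontrivial_of_three_le_card (by rw [Nat.card_eq_fintype_card]; omega)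
  have hP0 : A ≤ H 0 := by rw [h0]; exact le_top
  have hPl : ¬ A ≤ H (Fin.last m) := by
    rw [hl]
    intro hle
    obtain ⟨x, hxA, hx1⟩ := A.exists_ne_one_of_nontrivial
    exact hx1 (Subgroup.mem_bot.mp (hle hxA))
  obtain ⟨i, hPi, hPsi⟩ := exists_step (fun j => A ≤ H j) hP0 hPl
  have hKne : (H i.succ).subgroupOf A ≠ ⊤ := fun h => hPsi (Subgroup.subgroupOf_eq_top.mp h)
  have h1 : n ≤ ((H i.succ).subgroupOf A).index := by
    have := index_ge_of_ne_top (α := Fin n) (by omega) _ hKne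
    rwa [hcard] at this
  have h2 : (H i.succ).relIndex A ≤ (H i.succ).relIndex (H i.castSucc) :=
    Subgroup.relIndex_le_of_le_right hPi
      (Subgroup.index_ne_zero_of_finite (H := (H i.succ).subgroupOf (H i.castSucc)))
  have h3 : (H i.succ).relIndex (H i.castSucc) ≤ chainCost H := by
    unfold chainCost
    exact Finset.le_sup (f := fun i : Fin m => (H i.succ).relIndex (H i.castSucc))
      (Finset.mem_univ i)
  have h4 : (H i.succ).relIndex A = ((H i.succ).subgroupOf A).index := rfl
  omega

/-- The subgroup of permutations of `Fin n` fixing all points with index `< i`. -/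
def Hc (n i : ℕ) : Subgroup (Perm (Fin n)) where
  carrier := {σ | ∀ j : Fin n, (j : ℕ) < i → σ j = j}
  mul_mem' := fun {σ τ} hσ hτ j hj => by rw [mul_apply, hτ j hj, hσ j hj]
  one_mem' := fun j hj => rfl
  inv_mem' := fun {σ} hσ j hj => by rw [Perm.inv_eq_iff_eq, hσ j hj]

lemma mem_Hc {n i : ℕ} {σ : Perm (Fin n)} : σ ∈ Hc n i ↔ ∀ j : Fin n, (j : ℕ) < i → σ j = j :=
  Iff.rfl

lemma Hc_zero (n : ℕ) : Hc n 0 = ⊤ := by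
  ext σ; simp [mem_Hc]

lemma Hc_antitone {n i j : ℕ} (h : i ≤ j) : Hc n j ≤ Hc n i :=
  fun σ hσ k hk => hσ k (lt_of_lt_of_le hk h)

lemma Hc_last {n : ℕ} (hn : 1 ≤ n) : Hc n (n - 1) = ⊥ := by
  ext σ
  simp only [Subgroup.mem_bot, mem_Hc]
  constructor
  · intro hσ
    have hfix : ∀ j : Fin n, σ j = j := by
      intro j
      by_cases hj : (j : ℕ) < n - 1
      · exact hσ j hj
      · have hjval : (j : ℕ) = n - 1 := by have := j.isLt; omega
        by_contra hne
        have hlt : ((σ j : Fin n) : ℕ) < n - 1 := by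
          have h1 := (σ j).isLt
          rcases Nat.lt_or_ge ((σ j : Fin n) : ℕ) (n - 1) with h | h
          · exact h
          · have hv : ((σ j : Fin n) : ℕ) = (j : ℕ) := by omega
            exact absurd (Fin.ext hv) hne
        exact hne (σ.injective (hσ (σ j) hlt))
    exact Equiv.ext hfix
  · rintro rfl j _
    rw [one_apply]

lemma Hc_succ_mem {n i : ℕ} (hi : i < n) {σ : Perm (Fin n)} (hσ : σ ∈ Hc n i) :
    σ ∈ Hc n (i + 1) ↔ σ ⟨i, hi⟩ = ⟨i, hi⟩ := by
  constructor
  · intro h; exact h ⟨i, hi⟩ (by simp)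
  · intro h j hj
    rcases Nat.lt_or_ge (j : ℕ) i with h' | h'
    · exact hσ j h'
    · have : j = ⟨i, hi⟩ := Fin.ext (by simp; omega)
      rw [this, h]

lemma Hc_val_lt {n i : ℕ} (hi : i < n) {σ : Perm (Fin n)} (hσ : σ ∈ Hc n i)
    (hne : σ ⟨i, hi⟩ ≠ ⟨i, hi⟩) : i < ((σ ⟨i, hi⟩ : Fin n) : ℕ) := by
  rcases Nat.lt_or_ge i ((σ ⟨i, hi⟩ : Fin n) : ℕ) with h | h
  · exact h
  rcases Nat.lt_or_ge ((σ ⟨i, hi⟩ : Fin n) : ℕ) i with h' | h'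
  · exfalso
    have := hσ _ h'
    exact hne (σ.injective this)
  · have hv : ((σ ⟨i, hi⟩ : Fin n) : ℕ) = i := by omega
    exact absurd (Fin.ext hv) hne

lemma Hc_maximal {n i : ℕ} (hi : i < n) (K : Subgroup (Perm (Fin n)))
    (hK1 : Hc n (i + 1) < K) (hK2 : K ≤ Hc n i) : Hc n i ≤ K := by
  set p : Fin n := ⟨i, hi⟩ with hp
  obtain ⟨σ, hσK, hσn⟩ := SetLike.exists_of_lt hK1
  have hσi : σ ∈ Hc n i := hK2 hσK
  have hσp : σ p ≠ p := fun h => hσn ((Hc_succ_mem hi hσi).mpr h)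
  set b := σ p with hb
  have hbv : i < (b : ℕ) := Hc_val_lt hi hσi hσp
  intro τ hτ
  by_cases hc : τ p = p
  · exact hK1.le ((Hc_succ_mem hi hτ).mpr hc)
  set c := τ p with hcdef
  have hcv : i < (c : ℕ) := Hc_val_lt hi hτ hc
  -- get κ ∈ K with κ p = c
  obtain ⟨κ, hκK, hκp⟩ : ∃ κ, κ ∈ K ∧ κ p = c := by
    by_cases hcb : c = b
    · exact ⟨σ, hσK, by rw [← hb, hcb]⟩
    · refine ⟨Equiv.swap b c * σ, ?_, ?_⟩
      · refine mul_mem (hK1.le ?_) hσK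
        intro j hj
        have hjb : j ≠ b := fun h => by rw [h] at hj; omega
        have hjc : j ≠ c := fun h => by rw [h] at hj; omega
        exact swap_apply_of_ne_of_ne hjb hjc
      · rw [mul_apply, ← hb, swap_apply_left]
  have hκi : κ ∈ Hc n i := hK2 hκK
  have hrest : κ⁻¹ * τ ∈ Hc n (i + 1) := by
    have hmem : κ⁻¹ * τ ∈ Hc n i := mul_mem (inv_mem hκi) hτ
    refine (Hc_succ_mem hi hmem).mpr ?_
    rw [mul_apply, ← hcdef, Perm.inv_eq_iff_eq, hκp]
  have : τ = κ * (κ⁻¹ * τ) := by group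
  rw [this]
  exact mul_mem hκK (hK1.le hrest)

lemma Hc_relindex_le {n i : ℕ} (hi : i < n) : (Hc n (i + 1)).relIndex (Hc n i) ≤ n := by
  set p : Fin n := ⟨i, hi⟩ with hp
  set S := (Hc n (i + 1)).subgroupOf (Hc n i) with hS
  have hwd : ∀ x y : ↥(Hc n i), @Setoid.r _ (QuotientGroup.leftRel S) x y →
      (x : Perm (Fin n)) p = (y : Perm (Fin n)) p := by
    intro x y hxy
    rw [QuotientGroup.leftRel_apply] at hxy
    have hmem : ((x⁻¹ * y : ↥(Hc n i)) : Perm (Fin n)) ∈ Hc n (i + 1) :=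
      Subgroup.mem_subgroupOf.mp hxy
    have := hmem p (by simp [hp])
    rw [Subgroup.coe_mul, Subgroup.coe_inv, mul_apply, Perm.inv_eq_iff_eq] at this
    exact this.symm
  have hinj : Function.Injective
      (fun q : ↥(Hc n i) ⧸ S => Quotient.liftOn' q (fun σ => (σ : Perm (Fin n)) p) hwd) := by
    intro q1 q2
    refine Quotient.inductionOn₂' q1 q2 ?_
    intro x y h
    simp only [Quotient.liftOn'_mk''] at h
    apply Quotient.sound'
    rw [QuotientGroup.leftRel_apply]
    refine Subgroup.mem_subgroupOf.mpr ?_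
    have hmem : ((x⁻¹ * y : ↥(Hc n i)) : Perm (Fin n)) ∈ Hc n i := (x⁻¹ * y).2
    refine (Hc_succ_mem hi hmem).mpr ?_
    rw [Subgroup.coe_mul, Subgroup.coe_inv, mul_apply, Perm.inv_eq_iff_eq]
    exact h.symm
  have hcard : Nat.card (↥(Hc n i) ⧸ S) ≤ Nat.card (Fin n) :=
    Nat.card_le_card_of_injective _ hinj
  calc (Hc n (i + 1)).relIndex (Hc n i) = Nat.card (↥(Hc n i) ⧸ S) := rfl
    _ ≤ Nat.card (Fin n) := hcard
    _ = n := by simp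

lemma Hc_lt {n i : ℕ} (hi : i + 1 < n) : Hc n (i + 1) < Hc n i := by
  rw [SetLike.lt_iff_le_and_exists]
  refine ⟨Hc_antitone (by omega), Equiv.swap ⟨i, by omega⟩ ⟨i + 1, hi⟩, ?_, ?_⟩
  · intro j hj
    have h1 : j ≠ ⟨i, by omega⟩ := fun h => by
      rw [h] at hj; exact absurd hj (show ¬(i < i) by omega)
    have h2 : j ≠ ⟨i + 1, hi⟩ := fun h => by
      rw [h] at hj; exact absurd hj (show ¬(i + 1 < i) by omega)
    exact swap_apply_of_ne_of_ne h1 h2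
  · intro hmem
    have := hmem ⟨i, by omega⟩ (by simp)
    rw [swap_apply_left] at this
    have := congrArg Fin.val this
    simp at this

/-- For `n ≥ 5`, the Galois width of the symmetric group `S_n` equals `n`. -/
theorem stmt14 (n : ℕ) (hn : 5 ≤ n) : galoisWidth (Equiv.Perm (Fin n)) = n := by
  set m := n - 1 with hm
  set Hchain : Fin (m + 1) → Subgroup (Perm (Fin n)) := fun j => Hc n j with hHchain
  have hmax : IsMaximalSubgroupChain Hchain := by
    refine ⟨?_, ?_, ?_⟩
    · show Hc n ((0 : Fin (m + 1)) : ℕ) = ⊤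
      rw [Fin.val_zero]
      exact Hc_zero n
    · show Hc n ((Fin.last m : Fin (m + 1)) : ℕ) = ⊥
      rw [Fin.val_last]
      exact Hc_last (by omega)
    · intro i
      have hiv : (i : ℕ) < m := i.isLt
      have hisucc : (i.succ : ℕ) = (i : ℕ) + 1 := rfl
      have hicast : (i.castSucc : ℕ) = (i : ℕ) := rfl
      constructor
      · show Hc n (i.succ : ℕ) < Hc n (i.castSucc : ℕ)
        rw [hisucc, hicast]
        exact Hc_lt (by omega)
      · intro K hK
        obtain ⟨h1, h2⟩ := hK
        rw [show (Hchain i.succ) = Hc n ((i : ℕ) + 1) from rfl] at h1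
        rw [show (Hchain i.castSucc) = Hc n (i : ℕ) from rfl] at h2
        exact absurd (Hc_maximal (by omega) K h1 h2.le) (not_le_of_gt h2)
  have hcostle : chainCost Hchain ≤ n := by
    apply Finset.sup_le
    intro i _
    have hiv : (i : ℕ) < m := i.isLt
    show (Hc n ((i : ℕ) + 1)).relIndex (Hc n (i : ℕ)) ≤ n
    exact Hc_relindex_le (by omega)
  set Sset : Set ℕ := {c : ℕ | ∃ (k : ℕ) (H : Fin (k + 1) → Subgroup (Perm (Fin n))),
    IsMaximalSubgroupChain H ∧ chainCost H = c} with hSset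
  have hmemS : chainCost Hchain ∈ Sset := ⟨m, Hchain, hmax, rfl⟩
  have hup : galoisWidth (Equiv.Perm (Fin n)) ≤ n :=
    le_trans (Nat.sInf_le hmemS) hcostle
  have hlow : n ≤ galoisWidth (Equiv.Perm (Fin n)) := by
    have hne : Sset.Nonempty := ⟨_, hmemS⟩
    obtain ⟨k, H, hmax', hc⟩ := Nat.sInf_mem hne
    rw [galoisWidth, ← hc]
    exact lower_bound hn H hmax'.1 hmax'.2.1
  omega
end

section
/- Galois width is monotone under taking subgroups: for any finite group G and any subgroup H ≤ G, one has B(H) ≤ B(G). -/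
section Aux

variable {Γ : Type*} [Group Γ] [Finite Γ]

/-- The relation of being covered with relative index at most `c`. -/
def relC (Γ : Type*) [Group Γ] (c : ℕ) : SetRel (Subgroup Γ) (Subgroup Γ) :=
  {x | x.2 ⋖ x.1 ∧ x.2.relIndex x.1 ≤ c}

lemma relindex_ne_zero_fin (A B : Subgroup Γ) : A.relIndex B ≠ 0 :=
  Subgroup.index_ne_zero_of_finite

/-- In a finite group, between any `A ≤ B` there is a maximal chain all of whose
relative indices are at most `A.relindex B`. -/
lemma chainBetween (c : ℕ) (N : ℕ) :
    ∀ A B : Subgroup Γ, A ≤ B → A.relIndex B = N → A.relIndex B ≤ c →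
      ∃ p : RelSeries (relC Γ c), p.head = B ∧ p.last = A := by
  induction N using Nat.strong_induction_on with
  | _ N ih =>
    intro A B hAB hN hc
    rcases eq_or_lt_of_le hAB with rfl | hlt
    · exact ⟨RelSeries.singleton _ A, rfl, rfl⟩
    · obtain ⟨C, hAC, hCB⟩ := exists_le_covBy_of_lt hlt
      have hmul : A.relIndex C * C.relIndex B = A.relIndex B :=
        Subgroup.relIndex_mul_relIndex A C B hAC hCB.le
      have hCB1 : C.relIndex B ≠ 1 := by
        intro h1
        exact hCB.lt.not_ge (Subgroup.relIndex_eq_one.mp h1)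
      have hCB2 : 2 ≤ C.relIndex B :=
        (Nat.two_le_iff _).mpr ⟨relindex_ne_zero_fin _ _, hCB1⟩
      have hACpos : 0 < A.relIndex C := Nat.pos_of_ne_zero (relindex_ne_zero_fin _ _)
      have hlt' : A.relIndex C < N := by
        have : A.relIndex C * 2 ≤ A.relIndex C * C.relIndex B :=
          Nat.mul_le_mul_left _ hCB2
        omega
      have hACle : A.relIndex C ≤ c := by
        have : A.relIndex C ≤ A.relIndex B := by
          calc A.relIndex C ≤ A.relIndex C * C.relIndex B :=
                Nat.le_mul_of_pos_right _ (Nat.pos_of_ne_zero (relindex_ne_zero_fin _ _))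
            _ = A.relIndex B := hmul
        omega
      obtain ⟨p, hh, hl⟩ := ih (A.relIndex C) hlt' A C hAC rfl hACle
      have hCBle : C.relIndex B ≤ c := by
        have : C.relIndex B ≤ A.relIndex B :=
          Nat.le_of_dvd (Nat.pos_of_ne_zero (relindex_ne_zero_fin _ _)) (Dvd.intro_left _ hmul)
        omega
      have hrel : (B, p.head) ∈ relC Γ c := by rw [hh]; exact ⟨hCB, hCBle⟩
      exact ⟨p.cons B hrel, rfl, by simpa using hl⟩

end Aux

section Descend

variable {G : Type*} [Group G] [Finite G] (H : Subgroup G)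

lemma comap_relindex_le (A B : Subgroup G) :
    (A.comap H.subtype).relIndex (B.comap H.subtype) ≤ A.relIndex B := by
  rw [Subgroup.relIndex_comap]
  exact Subgroup.relIndex_le_of_le_right
    (le_trans (Subgroup.map_comap_le _ _) le_rfl) (relindex_ne_zero_fin _ _)

lemma descend (c : ℕ) : ∀ (m : ℕ) (Hc : Fin (m + 1) → Subgroup G),
    (∀ i : Fin m, Hc i.succ ≤ Hc i.castSucc ∧ (Hc i.succ).relIndex (Hc i.castSucc) ≤ c) →
    ∃ q : RelSeries (relC ↥H c),
      q.head = (Hc 0).comap H.subtype ∧ q.last = (Hc (Fin.last m)).comap H.subtype := by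
  intro m
  induction m with
  | zero =>
    intro Hc _
    exact ⟨RelSeries.singleton _ ((Hc 0).comap H.subtype), rfl, rfl⟩
  | succ m ih =>
    intro Hc hstep
    obtain ⟨q', hh', hl'⟩ := ih (fun i => Hc i.succ) (by
      intro i
      have h := hstep i.succ
      show Hc i.succ.succ ≤ Hc i.castSucc.succ ∧
        (Hc i.succ.succ).relIndex (Hc i.castSucc.succ) ≤ c
      rw [Fin.succ_castSucc]
      exact h)
    have h0 := hstep 0
    have hAB : (Hc (Fin.succ 0)).comap H.subtype ≤ (Hc (Fin.castSucc 0)).comap H.subtype :=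
      Subgroup.comap_mono h0.1
    have hle : ((Hc (Fin.succ 0)).comap H.subtype).relIndex
        ((Hc (Fin.castSucc 0)).comap H.subtype) ≤ c :=
      le_trans (comap_relindex_le H _ _) h0.2
    obtain ⟨p, hph, hpl⟩ := chainBetween c _ _ _ hAB rfl hle
    refine ⟨p.smash q' ?_, ?_, ?_⟩
    · rw [hpl, hh']
    · rw [RelSeries.head_smash, hph, Fin.castSucc_zero]
    · rw [RelSeries.last_smash, hl', Fin.succ_last]

end Descend

lemma relSeries_to_chain {Γ : Type*} [Group Γ] (c : ℕ) (p : RelSeries (relC Γ c))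
    (hh : p.head = ⊤) (hl : p.last = ⊥) :
    ∃ (n : ℕ) (K : Fin (n + 1) → Subgroup Γ), IsMaximalSubgroupChain K ∧ chainCost K ≤ c := by
  refine ⟨p.length, p.toFun, ⟨hh, hl, fun i => ?_⟩, ?_⟩
  · obtain ⟨hcov, -⟩ := p.step i
    exact ⟨hcov.lt, fun K hK => hcov.2 hK.1 hK.2⟩
  · unfold chainCost
    exact Finset.sup_le fun i _ => (p.step i).2

/-- Galois width is monotone under taking subgroups: for any finite group `G`
and subgroup `H ≤ G`, `B(H) ≤ B(G)`. -/
theorem stmt16 (G : Type*) [Group G] [Finite G] (H : Subgroup G) :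
    galoisWidth ↥H ≤ galoisWidth G := by
  classical
  set S : Set ℕ :=
    {c : ℕ | ∃ (n : ℕ) (Hc : Fin (n + 1) → Subgroup G),
      IsMaximalSubgroupChain Hc ∧ chainCost Hc = c} with hS
  have hSne : S.Nonempty := by
    obtain ⟨p, hh, hl⟩ := chainBetween ((⊥ : Subgroup G).relIndex ⊤)
      ((⊥ : Subgroup G).relIndex ⊤) ⊥ ⊤ bot_le rfl le_rfl
    obtain ⟨n, K, hK, -⟩ := relSeries_to_chain _ p hh hl
    exact ⟨chainCost K, n, K, hK, rfl⟩
  have hmem : galoisWidth G ∈ S := Nat.sInf_mem hSne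
  obtain ⟨n, Hc, ⟨htop, hbot, hstep⟩, hcost⟩ := hmem
  set c := galoisWidth G
  unfold chainCost at hcost
  obtain ⟨q, hqh, hql⟩ := descend H c n Hc (fun i => by
    refine ⟨(hstep i).1.le, ?_⟩
    exact le_trans (Finset.le_sup (f := fun i : Fin n => (Hc i.succ).relIndex (Hc i.castSucc)) (Finset.mem_univ i)) hcost.le)
  rw [htop] at hqh
  rw [hbot] at hql
  have hqh' : q.head = ⊤ := by
    rw [hqh]; exact Subgroup.comap_top _
  have hql' : q.last = ⊥ := by
    rw [hql, ← Subgroup.ker_subtype H, ← MonoidHom.comap_bot]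
  obtain ⟨m, K, hK, hKc⟩ := relSeries_to_chain c q hqh' hql'
  exact le_trans (Nat.sInf_le ⟨m, K, hK, rfl⟩) hKc
end
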